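/- arXiv:1010.6217 — 5 statements merged into one kernel-verified Lean document; each statement's English description precedes it below -/
import Mathlib

section
/- There is an absolute constant C such that for every real E ≥ 1 one has ∑_{E < d ≤ 2E} ρ(d) ≤ C·E, where the sum is over integers d in (E, 2E] and ρ(d) denotes the number of residue classes m modulo d² such that d² divides m²+1. -/
/-- `ρ(d) = #{m mod d² : d² ∣ m² + 1}`. -/
def rhoFn (d : ℕ) : ℕ :=
  ((Finset.range (d ^ 2)).filter (fun m => d ^ 2 ∣ m ^ 2 + 1)).card

/-- Bezout-style coprimality: if `a² + b² = d`, `d ∣ m² + 1` and `d ∣ a - m b`,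
then `b` is coprime to `d`. -/
lemma rho_bcop (d m a b : ℤ) (hd : d ≠ 0) (hm : d ∣ m ^ 2 + 1)
    (hab : a ^ 2 + b ^ 2 = d) (hc : d ∣ a - m * b) : IsCoprime b d := by
  obtain ⟨q, hq⟩ := hm
  obtain ⟨s, hs⟩ := hc
  refine ⟨b * q + 2 * m * s, s ^ 2, ?_⟩
  have key : d * ((b * q + 2 * m * s) * b + s ^ 2 * d) = d * 1 := by
    linear_combination (-(b ^ 2)) * hq - (d * s + a + m * b) * hs + hab
  exact mul_left_cancel₀ hd key

lemma rho_fiber_eq (d m₁ m₂ : ℕ) (h₁ : m₁ < d) (h₂ : m₂ < d)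
    (hm₁ : (d : ℤ) ∣ (m₁ : ℤ) ^ 2 + 1) (a b : ℤ) (hab : a ^ 2 + b ^ 2 = (d : ℤ))
    (hc₁ : (d : ℤ) ∣ a - (m₁ : ℤ) * b) (hc₂ : (d : ℤ) ∣ a - (m₂ : ℤ) * b) : m₁ = m₂ := by
  have hd0 : (0 : ℤ) < d := by exact_mod_cast lt_of_le_of_lt (Nat.zero_le m₁) h₁
  have hcop := rho_bcop d m₁ a b (ne_of_gt hd0) hm₁ hab hc₁
  have h3 : (d : ℤ) ∣ ((m₁ : ℤ) - m₂) * b := by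
    have h := dvd_sub hc₂ hc₁
    have heq : (a - (m₂ : ℤ) * b) - (a - (m₁ : ℤ) * b) = ((m₁ : ℤ) - m₂) * b := by ring
    rwa [heq] at h
  obtain ⟨t, ht⟩ := hcop.symm.dvd_of_dvd_mul_right h3
  have hb1 : (m₁ : ℤ) < d := by exact_mod_cast h₁
  have hb2 : (m₂ : ℤ) < d := by exact_mod_cast h₂
  have hm1n : (0 : ℤ) ≤ m₁ := Int.natCast_nonneg _
  have hm2n : (0 : ℤ) ≤ m₂ := Int.natCast_nonneg _
  have : (m₁ : ℤ) = m₂ := by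
    rcases lt_trichotomy t 0 with h | h | h
    · exfalso; nlinarith
    · rw [h, mul_zero] at ht; linarith
    · exfalso; nlinarith
  exact_mod_cast this

/-- Thue-type core: from a small vector in the lattice we get `a² + b² = d`. -/
lemma rho_thue_core (d k : ℕ) (m : ℤ) (hd : 2 ≤ d) (hodd : Odd d)
    (hm : (d : ℤ) ∣ m ^ 2 + 1) (hk1 : 1 ≤ k) (hkd : k * k ≤ d)
    (a b : ℤ) (hcong : (d : ℤ) ∣ a - m * b)
    (ha2 : a ^ 2 ≤ (k : ℤ) ^ 2) (hb2 : b ^ 2 ≤ (k : ℤ) ^ 2)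
    (hne : ¬(a = 0 ∧ b = 0)) :
    ∃ p : ℤ × ℤ, p.1 ^ 2 + p.2 ^ 2 = (d : ℤ) ∧ (d : ℤ) ∣ p.1 - m * p.2 := by
  have hd0 : (0 : ℤ) < d := by exact_mod_cast (by omega : 0 < d)
  have hkd' : (k : ℤ) * k ≤ d := by exact_mod_cast hkd
  have hdvd : (d : ℤ) ∣ a ^ 2 + b ^ 2 := by
    obtain ⟨s, hs⟩ := hcong
    obtain ⟨q, hq⟩ := hm
    exact ⟨s * (a + m * b) + b ^ 2 * q, by linear_combination (a + m * b) * hs + b ^ 2 * hq⟩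
  have hpos : 0 < a ^ 2 + b ^ 2 := by
    rcases not_and_or.mp hne with h | h
    · have h1 : a ^ 2 ≠ 0 := pow_ne_zero 2 h
      nlinarith [sq_nonneg a, sq_nonneg b, lt_of_le_of_ne (sq_nonneg a) (Ne.symm h1)]
    · have h1 : b ^ 2 ≠ 0 := pow_ne_zero 2 h
      nlinarith [sq_nonneg a, sq_nonneg b, lt_of_le_of_ne (sq_nonneg b) (Ne.symm h1)]
  obtain ⟨u, hu⟩ := hdvd
  have hu1 : 1 ≤ u := by nlinarith
  have hu2 : u ≤ 2 := by nlinarith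
  have : u = 1 ∨ u = 2 := by omega
  rcases this with rfl | rfl
  · exact ⟨⟨a, b⟩, by rw [hu, mul_one], hcong⟩
  · exfalso
    have hak : a ^ 2 = (k : ℤ) ^ 2 := by nlinarith
    have hbk : b ^ 2 = (k : ℤ) ^ 2 := by nlinarith
    have hdk2 : (d : ℤ) = (k : ℤ) ^ 2 := by nlinarith
    have hkne : (k : ℤ) ≠ 0 := by exact_mod_cast (by omega : k ≠ 0)
    have ha' : a = k ∨ a = -k := by
      rcases mul_eq_zero.mp (show (a - k) * (a + k) = 0 by linear_combination hak) with h | h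
      · exact Or.inl (by linarith)
      · exact Or.inr (by linarith)
    have hb' : b = k ∨ b = -k := by
      rcases mul_eq_zero.mp (show (b - k) * (b + k) = 0 by linear_combination hbk) with h | h
      · exact Or.inl (by linarith)
      · exact Or.inr (by linarith)
    rw [hdk2, sq] at hcong
    have hdvd1m : (k : ℤ) ∣ 1 - m ^ 2 := by
      rcases ha' with rfl | rfl <;> rcases hb' with rfl | rfl
      · have he : (k : ℤ) - m * k = k * (1 - m) := by ring
        rw [he] at hcong
        obtain ⟨c, hc⟩ := (mul_dvd_mul_iff_left hkne).mp hcong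
        exact ⟨c * (1 + m), by linear_combination (1 + m) * hc⟩
      · have he : (k : ℤ) - m * (-k) = k * (1 + m) := by ring
        rw [he] at hcong
        obtain ⟨c, hc⟩ := (mul_dvd_mul_iff_left hkne).mp hcong
        exact ⟨c * (1 - m), by linear_combination (1 - m) * hc⟩
      · have he : (-(k : ℤ)) - m * k = k * (-(1 + m)) := by ring
        rw [he] at hcong
        obtain ⟨c, hc⟩ := (mul_dvd_mul_iff_left hkne).mp hcong
        exact ⟨c * (m - 1), by linear_combination (m - 1) * hc⟩
      · have he : (-(k : ℤ)) - m * (-k) = k * (m - 1) := by ring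
        rw [he] at hcong
        obtain ⟨c, hc⟩ := (mul_dvd_mul_iff_left hkne).mp hcong
        exact ⟨c * (-(1 + m)), by linear_combination (-(1 + m)) * hc⟩
    have hkm : (k : ℤ) ∣ m ^ 2 + 1 := dvd_trans ⟨k, by rw [hdk2]; ring⟩ hm
    have hk2 : (k : ℤ) ∣ 2 := by
      have h := dvd_add hdvd1m hkm
      have he : (1 - m ^ 2) + (m ^ 2 + 1) = 2 := by ring
      rwa [he] at h
    have hk2n : k ∣ 2 := by exact_mod_cast hk2
    have hdkk : d = k * k := by exact_mod_cast (by rw [hdk2]; ring : (d : ℤ) = (k : ℤ) * k)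
    have hko : Odd k := (Nat.odd_mul.mp (hdkk ▸ hodd)).1
    have := Nat.le_of_dvd (by norm_num) hk2n
    rw [Nat.odd_iff] at hko
    interval_cases k <;> omega

lemma rho_thue (d : ℕ) (hd : 2 ≤ d) (hodd : Odd d) (m : ℕ)
    (hm : (d : ℤ) ∣ (m : ℤ) ^ 2 + 1) :
    ∃ p : ℤ × ℤ, p.1 ^ 2 + p.2 ^ 2 = (d : ℤ) ∧ (d : ℤ) ∣ p.1 - (m : ℤ) * p.2 := by
  haveI : NeZero d := ⟨by omega⟩
  have hk1 : 1 ≤ Nat.sqrt d := Nat.sqrt_pos.mpr (by omega)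
  have hdk : d < (Nat.sqrt d + 1) * (Nat.sqrt d + 1) := Nat.lt_succ_sqrt d
  have hkd : Nat.sqrt d * Nat.sqrt d ≤ d := Nat.sqrt_le d
  set k := Nat.sqrt d with hkdef
  obtain ⟨p₁, hp₁, p₂, hp₂, hne, hfe⟩ :=
    Finset.exists_ne_map_eq_of_card_lt_of_maps_to
      (s := (Finset.range (k + 1)) ×ˢ (Finset.range (k + 1)))
      (t := (Finset.univ : Finset (ZMod d)))
      (by
        rw [Finset.card_product, Finset.card_range, Finset.card_univ, ZMod.card]
        omega)
      (f := fun p => (p.1 : ZMod d) - (m : ZMod d) * (p.2 : ZMod d))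
      (fun p _ => Finset.mem_univ _)
  have hx1 : p₁.1 ≤ k := by
    have := Finset.mem_range.mp (Finset.mem_product.mp hp₁).1; omega
  have hy1 : p₁.2 ≤ k := by
    have := Finset.mem_range.mp (Finset.mem_product.mp hp₁).2; omega
  have hx2 : p₂.1 ≤ k := by
    have := Finset.mem_range.mp (Finset.mem_product.mp hp₂).1; omega
  have hy2 : p₂.2 ≤ k := by
    have := Finset.mem_range.mp (Finset.mem_product.mp hp₂).2; omega
  have hcong : (d : ℤ) ∣ ((p₁.1 : ℤ) - p₂.1) - (m : ℤ) * ((p₁.2 : ℤ) - p₂.2) := by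
    have h0 : ((((p₁.1 : ℤ) - p₂.1) - (m : ℤ) * ((p₁.2 : ℤ) - p₂.2) : ℤ) : ZMod d) = 0 := by
      push_cast
      linear_combination hfe
    exact (ZMod.intCast_zmod_eq_zero_iff_dvd _ d).mp h0
  apply rho_thue_core d k (m : ℤ) hd hodd hm hk1 (by omega)
    ((p₁.1 : ℤ) - p₂.1) ((p₁.2 : ℤ) - p₂.2) hcong
  · have h1 : -(k : ℤ) ≤ (p₁.1 : ℤ) - p₂.1 := by omega
    have h2 : (p₁.1 : ℤ) - p₂.1 ≤ k := by omega
    nlinarith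
  · have h1 : -(k : ℤ) ≤ (p₁.2 : ℤ) - p₂.2 := by omega
    have h2 : (p₁.2 : ℤ) - p₂.2 ≤ k := by omega
    nlinarith
  · rintro ⟨h1, h2⟩
    exact hne (Prod.ext (by omega) (by omega))

noncomputable def rhoPick (d m : ℕ) : ℤ × ℤ :=
  if h : 2 ≤ d ∧ Odd d ∧ (d : ℤ) ∣ (m : ℤ) ^ 2 + 1 then
    (rho_thue d h.1 h.2.1 m h.2.2).choose
  else (0, 0)

lemma rhoPick_spec {d m : ℕ} (h : 2 ≤ d ∧ Odd d ∧ (d : ℤ) ∣ (m : ℤ) ^ 2 + 1) :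
    (rhoPick d m).1 ^ 2 + (rhoPick d m).2 ^ 2 = (d : ℤ) ∧
      (d : ℤ) ∣ (rhoPick d m).1 - (m : ℤ) * (rhoPick d m).2 := by
  rw [rhoPick, dif_pos h]
  exact (rho_thue d h.1 h.2.1 m h.2.2).choose_spec

/-- unique lifting: solutions mod `d²` inject into solutions mod `d`. -/
lemma rho_lift_inj (d m₁ m₂ : ℕ) (hodd : Odd d) (h₁ : m₁ < d ^ 2) (h₂ : m₂ < d ^ 2)
    (hd₁ : d ^ 2 ∣ m₁ ^ 2 + 1) (hd₂ : d ^ 2 ∣ m₂ ^ 2 + 1) (hmod : m₁ % d = m₂ % d) :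
    m₁ = m₂ := by
  have hdpos : 0 < d := hodd.pos
  have hdne : ((d : ℤ)) ≠ 0 := by exact_mod_cast hdpos.ne'
  have hI₁ : (d : ℤ) ^ 2 ∣ (m₁ : ℤ) ^ 2 + 1 := by exact_mod_cast hd₁
  have hI₂ : (d : ℤ) ^ 2 ∣ (m₂ : ℤ) ^ 2 + 1 := by exact_mod_cast hd₂
  have hdvd12 : (d : ℤ) ∣ (m₁ : ℤ) - m₂ := by
    have h := (show Nat.ModEq d m₁ m₂ from hmod).dvd
    obtain ⟨t, ht⟩ := h
    exact ⟨-t, by linarith⟩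
  obtain ⟨t, ht⟩ := hdvd12
  have hdd : (d : ℤ) ∣ (m₁ : ℤ) ^ 2 + 1 := dvd_trans ⟨d, by ring⟩ hI₁
  obtain ⟨q, hq⟩ := hdd
  have c₁ : IsCoprime ((m₁ : ℤ)) (d : ℤ) := ⟨-m₁, q, by linear_combination -hq⟩
  have c₂ : IsCoprime (2 : ℤ) (d : ℤ) := by
    obtain ⟨r, hr⟩ := hodd
    refine ⟨-(r : ℤ), 1, ?_⟩
    have hdz : (d : ℤ) = 2 * r + 1 := by exact_mod_cast hr
    linear_combination hdz
  have c₃ : IsCoprime (2 * (m₁ : ℤ)) (d : ℤ) := c₂.mul_left c₁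
  have hcop : IsCoprime ((m₁ : ℤ) + m₂) (d : ℤ) := by
    have he : (m₁ : ℤ) + m₂ = 2 * m₁ + (d : ℤ) * (-t) := by linear_combination -ht
    rw [he]
    exact c₃.add_mul_left_left (-t)
  have h5 : (d : ℤ) * d ∣ ((m₁ : ℤ) ^ 2 + 1) - ((m₂ : ℤ) ^ 2 + 1) := by
    have := dvd_sub hI₁ hI₂
    rwa [sq ((d : ℤ))] at this
  have h6 : ((m₁ : ℤ) ^ 2 + 1) - ((m₂ : ℤ) ^ 2 + 1) = (d : ℤ) * (t * ((m₁ : ℤ) + m₂)) := by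
    linear_combination ((m₁ : ℤ) + m₂) * ht
  rw [h6] at h5
  have h7 : (d : ℤ) ∣ t * ((m₁ : ℤ) + m₂) := (mul_dvd_mul_iff_left hdne).mp h5
  obtain ⟨t', ht'⟩ := hcop.symm.dvd_of_dvd_mul_right h7
  have hfin : (m₁ : ℤ) - m₂ = ((d : ℤ) * d) * t' := by rw [ht, ht']; ring
  have hb1 : (m₁ : ℤ) < (d : ℤ) * d := by
    have : ((m₁ : ℤ)) < ((d ^ 2 : ℕ) : ℤ) := by exact_mod_cast h₁
    push_cast at this; nlinarith
  have hb2 : (m₂ : ℤ) < (d : ℤ) * d := by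
    have : ((m₂ : ℤ)) < ((d ^ 2 : ℕ) : ℤ) := by exact_mod_cast h₂
    push_cast at this; nlinarith
  have hm1n : (0 : ℤ) ≤ m₁ := Int.natCast_nonneg _
  have hm2n : (0 : ℤ) ≤ m₂ := Int.natCast_nonneg _
  have hddpos : (0 : ℤ) < (d : ℤ) * d := by positivity
  have : (m₁ : ℤ) = m₂ := by
    rcases lt_trichotomy t' 0 with h | h | h
    · exfalso; nlinarith
    · rw [h, mul_zero] at hfin; linarith
    · exfalso; nlinarith
  exact_mod_cast this

lemma rho_le_sol (d : ℕ) :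
    rhoFn d ≤ ((Finset.range d).filter (fun m => Odd d ∧ d ∣ m ^ 2 + 1)).card := by
  rcases Nat.eq_zero_or_pos (rhoFn d) with h | h
  · omega
  obtain ⟨M, hM⟩ := Finset.card_pos.mp h
  simp only [Finset.mem_filter, Finset.mem_range] at hM
  have hdpos : 0 < d := by
    rcases Nat.eq_zero_or_pos d with rfl | h'
    · simp at hM
    · exact h'
  have hodd : Odd d := by
    rcases Nat.even_or_odd d with he | ho
    · exfalso
      obtain ⟨r, hr⟩ := he
      have h4 : 4 ∣ M ^ 2 + 1 := dvd_trans ⟨r * r, by subst hr; ring⟩ hM.2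
      obtain ⟨c, hc⟩ := h4
      rcases Nat.even_or_odd M with ⟨w, hw⟩ | ⟨w, hw⟩
      · have hM2 : M ^ 2 + 1 = 4 * (w * w) + 1 := by subst hw; ring
        obtain ⟨u, hu⟩ : ∃ u, w * w = u := ⟨_, rfl⟩
        rw [hu] at hM2; omega
      · have hM2 : M ^ 2 + 1 = 4 * (w * w + w) + 2 := by subst hw; ring
        obtain ⟨u, hu⟩ : ∃ u, w * w + w = u := ⟨_, rfl⟩
        rw [hu] at hM2; omega
    · exact ho
  apply Finset.card_le_card_of_injOn (fun m => m % d)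
  · intro m hm
    simp only [Finset.mem_coe, Finset.mem_filter, Finset.mem_range] at hm ⊢
    refine ⟨Nat.mod_lt _ hdpos, hodd, ?_⟩
    have h1 : d ∣ m ^ 2 + 1 := dvd_trans (dvd_pow_self d two_ne_zero) hm.2
    have h2 : (m % d) ^ 2 + 1 ≡ m ^ 2 + 1 [MOD d] :=
      Nat.ModEq.add_right 1 ((Nat.mod_modEq m d).pow 2)
    exact Nat.modEq_zero_iff_dvd.mp (h2.trans (Nat.modEq_zero_iff_dvd.mpr h1))
  · intro m₁ h₁ m₂ h₂ heq
    simp only [Finset.coe_filter, Set.mem_setOf_eq, Finset.mem_range] at h₁ h₂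
    exact rho_lift_inj d m₁ m₂ hodd h₁.1 h₂.1 h₁.2 h₂.2 heq

/-- `∑_{E < d ≤ 2E} ρ(d) ≪ E`. -/
theorem rhoFn_dyadic_sum_bound :
    ∃ C : ℝ, ∀ E : ℝ, 1 ≤ E →
      (∑ d ∈ Finset.Ioc ⌊E⌋₊ ⌊2 * E⌋₊, (rhoFn d : ℝ)) ≤ C * E := by
  refine ⟨18, fun E hE => ?_⟩
  set N₁ := ⌊E⌋₊ with hN₁def
  set N₂ := ⌊2 * E⌋₊ with hN₂def
  set K := Nat.sqrt N₂ with hKdef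
  have hN₁ : 1 ≤ N₁ := Nat.le_floor (by exact_mod_cast hE)
  have key : ∑ d ∈ Finset.Ioc N₁ N₂, rhoFn d ≤ (2 * K + 1) ^ 2 := by
    have hIcc : (Finset.Icc (-(K : ℤ)) K).card = 2 * K + 1 := by
      rw [Int.card_Icc]; omega
    calc ∑ d ∈ Finset.Ioc N₁ N₂, rhoFn d
        ≤ ∑ d ∈ Finset.Ioc N₁ N₂,
            ((Finset.range d).filter (fun m => Odd d ∧ d ∣ m ^ 2 + 1)).card :=
          Finset.sum_le_sum (fun d _ => rho_le_sol d)
      _ = ((Finset.Ioc N₁ N₂).sigma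
            (fun d => (Finset.range d).filter (fun m => Odd d ∧ d ∣ m ^ 2 + 1))).card :=
          (Finset.card_sigma _ _).symm
      _ ≤ ((Finset.Icc (-(K : ℤ)) K) ×ˢ (Finset.Icc (-(K : ℤ)) K)).card := ?_
      _ = (2 * K + 1) ^ 2 := by rw [Finset.card_product, hIcc]; ring
    apply Finset.card_le_card_of_injOn (fun x => rhoPick x.1 x.2)
    · rintro ⟨d, m⟩ hx
      obtain ⟨hd, hm⟩ := Finset.mem_sigma.mp hx
      have hd' : N₁ < d ∧ d ≤ N₂ := Finset.mem_Ioc.mp hd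
      have hm' : m < d ∧ (Odd d ∧ d ∣ m ^ 2 + 1) := by
        have := Finset.mem_filter.mp hm
        exact ⟨Finset.mem_range.mp this.1, this.2⟩
      have hcond : 2 ≤ d ∧ Odd d ∧ (d : ℤ) ∣ (m : ℤ) ^ 2 + 1 :=
        ⟨by omega, hm'.2.1, by exact_mod_cast hm'.2.2⟩
      obtain ⟨hs1, _⟩ := rhoPick_spec hcond
      have hdN : (d : ℤ) ≤ ((N₂ : ℕ) : ℤ) := by exact_mod_cast hd'.2
      have ha2 : (rhoPick d m).1 ^ 2 ≤ ((N₂ : ℕ) : ℤ) := by nlinarith [sq_nonneg (rhoPick d m).2]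
      have hb2 : (rhoPick d m).2 ^ 2 ≤ ((N₂ : ℕ) : ℤ) := by nlinarith [sq_nonneg (rhoPick d m).1]
      have haK : (rhoPick d m).1.natAbs ≤ K := by
        rw [hKdef]
        apply Nat.le_sqrt.mpr
        have h := Int.natAbs_mul_self (a := (rhoPick d m).1)
        have : (((rhoPick d m).1.natAbs * (rhoPick d m).1.natAbs : ℕ) : ℤ) ≤ ((N₂ : ℕ) : ℤ) := by
          rw [h]; nlinarith
        exact_mod_cast this
      have hbK : (rhoPick d m).2.natAbs ≤ K := by
        rw [hKdef]
        apply Nat.le_sqrt.mpr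
        have h := Int.natAbs_mul_self (a := (rhoPick d m).2)
        have : (((rhoPick d m).2.natAbs * (rhoPick d m).2.natAbs : ℕ) : ℤ) ≤ ((N₂ : ℕ) : ℤ) := by
          rw [h]; nlinarith
        exact_mod_cast this
      simp only [Finset.mem_coe, Finset.mem_product, Finset.mem_Icc]
      omega
    · rintro ⟨d₁, m₁⟩ hx ⟨d₂, m₂⟩ hy hxy
      simp only [Finset.coe_sigma, Set.mem_sigma_iff, Finset.mem_coe, Finset.mem_Ioc,
        Finset.mem_filter, Finset.mem_range] at hx hy
      have hcond₁ : 2 ≤ d₁ ∧ Odd d₁ ∧ (d₁ : ℤ) ∣ (m₁ : ℤ) ^ 2 + 1 :=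
        ⟨by omega, hx.2.2.1, by exact_mod_cast hx.2.2.2⟩
      have hcond₂ : 2 ≤ d₂ ∧ Odd d₂ ∧ (d₂ : ℤ) ∣ (m₂ : ℤ) ^ 2 + 1 :=
        ⟨by omega, hy.2.2.1, by exact_mod_cast hy.2.2.2⟩
      obtain ⟨hs1x, hs2x⟩ := rhoPick_spec hcond₁
      obtain ⟨hs1y, hs2y⟩ := rhoPick_spec hcond₂
      have hxy' : rhoPick d₁ m₁ = rhoPick d₂ m₂ := hxy
      have hdd : d₁ = d₂ := by
        have : ((d₁ : ℕ) : ℤ) = ((d₂ : ℕ) : ℤ) := by rw [← hs1x, hxy', hs1y]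
        exact_mod_cast this
      subst hdd
      have hmm : m₁ = m₂ := by
        apply rho_fiber_eq d₁ m₁ m₂ hx.2.1 hy.2.1 hcond₁.2.2
          (rhoPick d₁ m₁).1 (rhoPick d₁ m₁).2 hs1x hs2x
        rw [hxy']
        exact hs2y
      rw [hmm]
  have hcast : (∑ d ∈ Finset.Ioc N₁ N₂, (rhoFn d : ℝ))
      = ((∑ d ∈ Finset.Ioc N₁ N₂, rhoFn d : ℕ) : ℝ) := by push_cast; ring
  rw [hcast]
  have h1 : ((∑ d ∈ Finset.Ioc N₁ N₂, rhoFn d : ℕ) : ℝ) ≤ (((2 * K + 1) ^ 2 : ℕ) : ℝ) :=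
    Nat.cast_le.mpr key
  refine le_trans h1 ?_
  have hK2E : ((K : ℝ)) ^ 2 ≤ 2 * E := by
    have h2 : K * K ≤ N₂ := Nat.sqrt_le N₂
    have h3 : ((N₂ : ℕ) : ℝ) ≤ 2 * E := Nat.floor_le (by linarith)
    have h4 : ((K * K : ℕ) : ℝ) ≤ ((N₂ : ℕ) : ℝ) := Nat.cast_le.mpr h2
    push_cast at h4
    nlinarith
  have hK0 : (0 : ℝ) ≤ (K : ℝ) := Nat.cast_nonneg K
  push_cast
  nlinarith [sq_nonneg ((K : ℝ) - 1)]
end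

section
/- There is an absolute constant C such that for every real D ≥ 1 one has ∑_{d > D} ρ(d)/d² ≤ C/D, where the sum is over integers d > D and ρ(d) denotes the number of residue classes m modulo d² such that d² divides m²+1. -/
theorem lem1 {q : ℕ} (hq : q.Prime) (hq2 : q ≠ 2) (k : ℕ) {m₁ m₂ : ℤ}
    (h1 : (q:ℤ)^k ∣ m₁^2+1) (h2 : (q:ℤ)^k ∣ m₂^2+1) (h : (q:ℤ) ∣ m₁ - m₂) :
    (q:ℤ)^k ∣ m₁ - m₂ := by
  rcases Nat.eq_zero_or_pos k with hk | hk
  · simp [hk]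
  have hqz : Prime (q:ℤ) := Nat.prime_iff_prime_int.mp hq
  have hprod : (q:ℤ)^k ∣ (m₁ - m₂) * (m₁ + m₂) := by
    have := dvd_sub h1 h2
    have e : m₁^2+1 - (m₂^2+1) = (m₁ - m₂) * (m₁ + m₂) := by ring
    rwa [e] at this
  have hq1 : (q:ℤ) ∣ m₁^2 + 1 := dvd_trans (dvd_pow_self _ hk.ne') h1
  have hnd : ¬ (q:ℤ) ∣ (m₁ + m₂) := by
    intro hd
    have h2m : (q:ℤ) ∣ 2 * m₁ := by
      have e : (2:ℤ) * m₁ = (m₁ + m₂) + (m₁ - m₂) := by ring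
      rw [e]; exact dvd_add hd h
    rcases hqz.dvd_mul.mp h2m with h2' | hm
    · have : q ∣ 2 := by exact_mod_cast h2'
      exact hq2 ((Nat.prime_dvd_prime_iff_eq hq Nat.prime_two).mp this)
    · have : (q:ℤ) ∣ 1 := by
        have e : (1:ℤ) = (m₁^2+1) - m₁*m₁ := by ring
        rw [e]; exact dvd_sub hq1 (Dvd.dvd.mul_left hm m₁)
      exact hqz.not_unit (isUnit_of_dvd_one this)
  have hcop : IsCoprime ((q:ℤ)^k) (m₁ + m₂) :=
    IsCoprime.pow_left ((hqz.coprime_iff_not_dvd).mpr hnd)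
  exact (IsCoprime.dvd_of_dvd_mul_right hcop) hprod

-- Thue: representation d = u² + v² with v*m ≡ u (mod d)
theorem thue {d : ℕ} (hd : Odd d) (hd1 : 1 ≤ d) {m : ℤ} (hm : (d:ℤ) ∣ m^2+1) :
    ∃ u v : ℤ, u^2 + v^2 = (d:ℤ) ∧ (d:ℤ) ∣ v*m - u := by
  haveI : NeZero d := ⟨by omega⟩
  set s := Nat.sqrt d with hs
  have hcard : Fintype.card (ZMod d) < ((Finset.range (s+1)) ×ˢ (Finset.range (s+1))).card := by
    rw [Finset.card_product, Finset.card_range, ZMod.card]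
    have := Nat.lt_succ_sqrt d
    nlinarith [Nat.sqrt_le d]
  obtain ⟨p₁, hp₁, p₂, hp₂, hne, heq⟩ :=
    Finset.exists_ne_map_eq_of_card_lt_of_maps_to hcard
      (f := fun p : ℕ × ℕ => (p.1 : ZMod d) * (m : ZMod d) - (p.2 : ZMod d))
      (fun _ _ => Finset.mem_univ _)
  set v₀ : ℤ := (p₁.1 : ℤ) - p₂.1 with hv₀
  set u₀ : ℤ := (p₁.2 : ℤ) - p₂.2 with hu₀
  have hdvd0 : (d:ℤ) ∣ v₀*m - u₀ := by
    have h0 : ((v₀*m - u₀ : ℤ) : ZMod d) = 0 := by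
      rw [hv₀, hu₀]
      push_cast
      linear_combination heq
    exact (ZMod.intCast_zmod_eq_zero_iff_dvd _ _).mp h0
  have hub : u₀^2 ≤ (d:ℤ) := by
    have b1 : p₁.2 ≤ s := by
      have := Finset.mem_product.mp hp₁; simpa using Nat.lt_succ_iff.mp (Finset.mem_range.mp this.2)
    have b2 : p₂.2 ≤ s := by
      have := Finset.mem_product.mp hp₂; simpa using Nat.lt_succ_iff.mp (Finset.mem_range.mp this.2)
    have hs2 : (s:ℤ)^2 ≤ d := by exact_mod_cast (by nlinarith [Nat.sqrt_le' d] : s^2 ≤ d)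
    have : u₀^2 ≤ (s:ℤ)^2 := by
      rw [hu₀]; nlinarith [(by exact_mod_cast b1 : (p₁.2:ℤ) ≤ s), (by exact_mod_cast b2 : (p₂.2:ℤ) ≤ s),
        (by positivity : (0:ℤ) ≤ (p₁.2:ℤ)), (by positivity : (0:ℤ) ≤ (p₂.2:ℤ))]
    linarith
  have hvb : v₀^2 ≤ (d:ℤ) := by
    have b1 : p₁.1 ≤ s := by
      have := Finset.mem_product.mp hp₁; simpa using Nat.lt_succ_iff.mp (Finset.mem_range.mp this.1)
    have b2 : p₂.1 ≤ s := by
      have := Finset.mem_product.mp hp₂; simpa using Nat.lt_succ_iff.mp (Finset.mem_range.mp this.1)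
    have hs2 : (s:ℤ)^2 ≤ d := by exact_mod_cast (by nlinarith [Nat.sqrt_le' d] : s^2 ≤ d)
    have : v₀^2 ≤ (s:ℤ)^2 := by
      rw [hv₀]; nlinarith [(by exact_mod_cast b1 : (p₁.1:ℤ) ≤ s), (by exact_mod_cast b2 : (p₂.1:ℤ) ≤ s),
        (by positivity : (0:ℤ) ≤ (p₁.1:ℤ)), (by positivity : (0:ℤ) ≤ (p₂.1:ℤ))]
    linarith
  have hnz : u₀ ≠ 0 ∨ v₀ ≠ 0 := by
    by_contra hcon
    push_neg at hcon
    apply hne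
    have e1 : (p₁.1:ℤ) = p₂.1 := by omega
    have e2 : (p₁.2:ℤ) = p₂.2 := by omega
    have : p₁.1 = p₂.1 := by exact_mod_cast e1
    have : p₁.2 = p₂.2 := by exact_mod_cast e2
    exact Prod.ext (by assumption) (by assumption)
  have hpos : 0 < u₀^2 + v₀^2 := by
    rcases hnz with h | h <;> positivity
  have hdn : (d:ℤ) ∣ u₀^2 + v₀^2 := by
    obtain ⟨k, hk⟩ := hdvd0
    obtain ⟨l, hl⟩ := hm
    have : u₀^2 + v₀^2 = v₀^2*(m^2+1) - (v₀*m + u₀)*(v₀*m - u₀) := by ring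
    rw [this, hk, hl]
    exact dvd_sub (Dvd.dvd.mul_left ⟨l, rfl⟩ _) (Dvd.dvd.mul_left ⟨k, rfl⟩ _)
  obtain ⟨c, hc⟩ := hdn
  have hc12 : c = 1 ∨ c = 2 := by
    have hd0 : (0:ℤ) < d := by exact_mod_cast hd1
    have : 0 < c := by nlinarith
    have : c ≤ 2 := by nlinarith
    omega
  rcases hc12 with h1 | h2
  · exact ⟨u₀, v₀, by rw [hc, h1, mul_one], hdvd0⟩
  · rw [h2] at hc
    obtain ⟨e, he⟩ := hd
    have hdvd1 : (d:ℤ) ∣ u₀*m + v₀ := by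
      obtain ⟨k, hk⟩ := hdvd0
      obtain ⟨l, hl⟩ := hm
      have ee : u₀*m + v₀ = -m*(v₀*m - u₀) + v₀*(m^2+1) := by ring
      rw [ee, hk, hl]
      exact dvd_add (Dvd.dvd.mul_left ⟨k, rfl⟩ _) (Dvd.dvd.mul_left ⟨l, rfl⟩ _)
    have hodd : Odd u₀ ∧ Odd v₀ := by
      rcases Int.even_or_odd u₀ with hu | hu <;> rcases Int.even_or_odd v₀ with hv | hv
      · exfalso
        obtain ⟨x, hx⟩ := hu; obtain ⟨y, hy⟩ := hv
        have h4 : 2*(x^2 + y^2) = 2*(e:ℤ) + 1 := by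
          have hde : (d:ℤ) = 2*(e:ℤ)+1 := by exact_mod_cast congrArg (Nat.cast : ℕ → ℤ) he
          rw [hx, hy, hde] at hc; linarith [hc]
        generalize x^2 + y^2 = t at h4
        omega
      · exfalso
        obtain ⟨x, hx⟩ := hu; obtain ⟨y, hy⟩ := hv
        have h4 : 4*(x^2) + (2*y+1)^2 = 2*(d:ℤ) := by rw [hx, hy] at hc; linarith [hc]
        have h5 : 4*(x^2) + 4*(y^2) + 4*y + 1 = 2*(d:ℤ) := by linarith [h4, sq_nonneg (2*y+1)] 
        generalize x^2 = t1 at h5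
        generalize y^2 = t2 at h5
        omega
      · exfalso
        obtain ⟨x, hx⟩ := hu; obtain ⟨y, hy⟩ := hv
        have h5 : 4*(x^2) + 4*x + 4*(y^2) + 1 = 2*(d:ℤ) := by rw [hx, hy] at hc; linarith [hc]
        generalize x^2 = t1 at h5
        generalize y^2 = t2 at h5
        omega
      · exact ⟨hu, hv⟩
    obtain ⟨a, ha⟩ := hodd.1
    obtain ⟨b, hb⟩ := hodd.2
    refine ⟨a - b, a + b + 1, ?_, ?_⟩
    · have : 2*((a+b+1)^2 + (a-b)^2) = 2*(d:ℤ) := by rw [ha, hb] at hc; linarith [hc]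
      linarith
    · have hsum : (d:ℤ) ∣ 2*((a+b+1)*m - (a-b)) := by
        have ee : 2*((a+b+1)*m - (a-b)) = (v₀*m - u₀) + (u₀*m + v₀) := by
          rw [ha, hb]; ring
        rw [ee]; exact dvd_add hdvd0 hdvd1
      have hcop : IsCoprime (2:ℤ) (d:ℤ) := by
        rw [Int.prime_two.coprime_iff_not_dvd]
        intro ⟨c2, hc2⟩
        omega
      have := hcop.symm.dvd_of_dvd_mul_right (by rwa [mul_comm] at hsum)
      exact this

theorem inj_lemma {d : ℕ} (hd : Odd d) {u v : ℤ} (huv : u^2 + v^2 = (d:ℤ))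
    {m₁ m₂ : ℕ} (hm₁ : d^2 ∣ m₁^2+1) (hm₂ : d^2 ∣ m₂^2+1)
    (hc₁ : (d:ℤ) ∣ v*(m₁:ℤ) - u) (hc₂ : (d:ℤ) ∣ v*(m₂:ℤ) - u)
    (hlt₁ : m₁ < d^2) (hlt₂ : m₂ < d^2) : m₁ = m₂ := by
  have hd0 : d ≠ 0 := by rintro rfl; simp at hd
  set t : ℤ := (m₁:ℤ) - m₂ with ht
  by_cases ht0 : t = 0
  · omega
  have hm₁' : ((d:ℤ))^2 ∣ (m₁:ℤ)^2+1 := by exact_mod_cast Int.natCast_dvd_natCast.mpr hm₁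
  have hm₂' : ((d:ℤ))^2 ∣ (m₂:ℤ)^2+1 := by exact_mod_cast Int.natCast_dvd_natCast.mpr hm₂
  have hdd : (d:ℤ) ∣ (m₁:ℤ)^2+1 := dvd_trans (by exact ⟨d, by push_cast; ring⟩) hm₁'
  have hdd₂ : (d:ℤ) ∣ (m₂:ℤ)^2+1 := dvd_trans (by exact ⟨d, by push_cast; ring⟩) hm₂'
  have hvt : (d:ℤ) ∣ v*t := by
    have := dvd_sub hc₁ hc₂
    have e : v*(m₁:ℤ) - u - (v*(m₂:ℤ) - u) = v*t := by rw [ht]; ring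
    rwa [e] at this
  have hut : (d:ℤ) ∣ u*t := by
    have h1 : (d:ℤ) ∣ u*(m₁:ℤ) + v := by
      obtain ⟨k, hk⟩ := hc₁; obtain ⟨l, hl⟩ := hdd
      have e : u*(m₁:ℤ) + v = -(m₁:ℤ)*(v*(m₁:ℤ) - u) + v*((m₁:ℤ)^2+1) := by ring
      rw [e, hk, hl]
      exact dvd_add (Dvd.dvd.mul_left ⟨k, rfl⟩ _) (Dvd.dvd.mul_left ⟨l, rfl⟩ _)
    have h2 : (d:ℤ) ∣ u*(m₂:ℤ) + v := by
      obtain ⟨k, hk⟩ := hc₂; obtain ⟨l, hl⟩ := hdd₂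
      have e : u*(m₂:ℤ) + v = -(m₂:ℤ)*(v*(m₂:ℤ) - u) + v*((m₂:ℤ)^2+1) := by ring
      rw [e, hk, hl]
      exact dvd_add (Dvd.dvd.mul_left ⟨k, rfl⟩ _) (Dvd.dvd.mul_left ⟨l, rfl⟩ _)
    have := dvd_sub h1 h2
    have e : u*(m₁:ℤ) + v - (u*(m₂:ℤ) + v) = u*t := by rw [ht]; ring
    rwa [e] at this
  -- main step: d² divides t.natAbs
  have hkey : d^2 ∣ t.natAbs := by
    rw [← Nat.factorization_le_iff_dvd (by positivity) (Int.natAbs_ne_zero.mpr ht0)]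
    rw [Finsupp.le_def]
    intro q
    by_cases hq : q.Prime
    · by_cases hqd : q ∣ d
      · have hq2 : q ≠ 2 := by
          rintro rfl
          rw [Nat.odd_iff] at hd
          omega
        have hqz : Prime (q:ℤ) := Nat.prime_iff_prime_int.mp hq
        set e := d.factorization q with he
        have he1 : 1 ≤ e := (Nat.Prime.factorization_pos_of_dvd hq hd0 hqd)
        have hqe_d : (q:ℤ)^e ∣ (d:ℤ) := by
          exact_mod_cast Int.natCast_dvd_natCast.mpr (Nat.ordProj_dvd d q)
        have hq2e : (q:ℤ)^(2*e) ∣ ((m₁:ℤ)^2+1) := by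
          refine dvd_trans ?_ hm₁'
          rw [two_mul, pow_add]
          exact mul_dvd_mul hqe_d hqe_d |>.trans (by rw [sq])
        have hq2e' : (q:ℤ)^(2*e) ∣ ((m₂:ℤ)^2+1) := by
          refine dvd_trans ?_ hm₂'
          rw [two_mul, pow_add]
          exact mul_dvd_mul hqe_d hqe_d |>.trans (by rw [sq])
        have hqt : (q:ℤ) ∣ t := by
          by_contra hqt
          have hcop : IsCoprime ((q:ℤ)^e) t :=
            IsCoprime.pow_left ((hqz.coprime_iff_not_dvd).mpr hqt)
          have hv' : (q:ℤ)^e ∣ v := hcop.dvd_of_dvd_mul_right (dvd_trans hqe_d hvt)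
          have hu' : (q:ℤ)^e ∣ u := hcop.dvd_of_dvd_mul_right (dvd_trans hqe_d hut)
          have hdv : (q:ℤ)^(2*e) ∣ (d:ℤ) := by
            rw [← huv, two_mul, pow_add]
            have : (q:ℤ)^e * (q:ℤ)^e ∣ u*u + v*v :=
              dvd_add (mul_dvd_mul hu' hu') (mul_dvd_mul hv' hv')
            rwa [show u*u + v*v = u^2+v^2 by ring] at this
          have hdvn : q^(2*e) ∣ d := by exact_mod_cast hdv
          have := Nat.pow_succ_factorization_not_dvd hd0 hq
          exact this (dvd_trans (pow_dvd_pow q (by omega)) hdvn)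
        have := lem1 hq hq2 (2*e) hq2e hq2e' hqt
        have habs : q^(2*e) ∣ t.natAbs := by
          have h' := Int.natAbs_dvd_natAbs.mpr this
          have e2 : ((q:ℤ)^(2*e)).natAbs = q^(2*e) := by
            rw [Int.natAbs_pow]; simp
          rwa [e2] at h' 
        rw [Nat.factorization_pow]
        simp only [Finsupp.smul_apply, smul_eq_mul]
        rw [← he]
        exact (Nat.Prime.pow_dvd_iff_le_factorization hq (Int.natAbs_ne_zero.mpr ht0)).mp habs
      · rw [Nat.factorization_pow]
        simp [Nat.factorization_eq_zero_of_not_dvd hqd]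
    · rw [Nat.factorization_pow]
      simp [Nat.factorization_eq_zero_of_not_prime _ hq]
  -- conclude
  exfalso
  have h1 : ((d:ℤ))^2 ≤ |t| := by
    have : ((d^2 : ℕ) : ℤ) ∣ |t| := by
      rw [Int.abs_eq_natAbs]
      exact_mod_cast Int.natCast_dvd_natCast.mpr hkey
    have := Int.le_of_dvd (abs_pos.mpr ht0) this
    push_cast at this ⊢
    linarith
  have h2 : |t| < ((d:ℤ))^2 := by
    rw [ht, abs_lt]
    constructor <;> [skip; skip] <;> push_cast <;>
      [nlinarith [(by exact_mod_cast hlt₂ : ((m₂:ℤ)) < ((d:ℤ))^2), (by positivity : (0:ℤ) ≤ (m₁:ℤ))] ;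
       nlinarith [(by exact_mod_cast hlt₁ : ((m₁:ℤ)) < ((d:ℤ))^2), (by positivity : (0:ℤ) ≤ (m₂:ℤ))]]
  linarith

noncomputable def pairT (d : ℕ) : Finset (ℤ × ℤ) :=
  (Finset.Icc (-(d:ℤ)) d ×ˢ Finset.Icc (-(d:ℤ)) d).filter (fun p => p.1^2 + p.2^2 = (d:ℤ))

theorem rho_even {d : ℕ} (hd : Even d) : rhoFn d = 0 := by
  rw [rhoFn, Finset.card_eq_zero, Finset.filter_eq_empty_iff]
  intro m hm hdvd
  obtain ⟨k, hk⟩ := hd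
  rcases Nat.eq_zero_or_pos k with hk0 | hk0
  · subst hk0; subst hk; simp at hdvd
  have h4 : 4 ∣ m^2+1 := by
    refine dvd_trans ?_ hdvd
    exact ⟨k*k, by subst hk; ring⟩
  obtain ⟨c, hc⟩ := h4
  rcases Nat.even_or_odd m with ⟨j, hj⟩ | ⟨j, hj⟩
  · subst hj
    have : (j+j)^2 + 1 = 4*(j*j) + 1 := by ring
    omega
  · subst hj
    have : (2*j+1)^2 + 1 = 4*(j*j+j) + 2 := by ring
    omega

theorem rho_le_card {d : ℕ} (hd : Odd d) : rhoFn d ≤ (pairT d).card := by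
  classical
  have hd1 : 1 ≤ d := by
    rcases Nat.eq_zero_or_pos d with h | h
    · subst h; simp at hd
    · exact h
  rw [rhoFn]
  set P : ℕ → ℤ × ℤ → Prop := fun m p => p.1^2 + p.2^2 = (d:ℤ) ∧ (d:ℤ) ∣ p.2*(m:ℤ) - p.1 with hP
  set F : ℕ → ℤ × ℤ := fun m => if h : ∃ p : ℤ × ℤ, P m p then h.choose else (0,0) with hF
  have hex : ∀ m ∈ (Finset.range (d ^ 2)).filter (fun m => d ^ 2 ∣ m ^ 2 + 1), ∃ p : ℤ × ℤ, P m p := by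
    intro m hm
    have hdvd : d^2 ∣ m^2+1 := (Finset.mem_filter.mp hm).2
    have hdm : (d:ℤ) ∣ (m:ℤ)^2+1 := by
      have : d ∣ m^2+1 := dvd_trans (dvd_pow_self d (by norm_num)) hdvd
      exact_mod_cast Int.natCast_dvd_natCast.mpr this
    obtain ⟨u, v, h1, h2⟩ := thue hd hd1 hdm
    exact ⟨(u, v), h1, h2⟩
  have hspec : ∀ m ∈ (Finset.range (d ^ 2)).filter (fun m => d ^ 2 ∣ m ^ 2 + 1), P m (F m) := by
    intro m hm
    have h := hex m hm
    simp only [hF, dif_pos h]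
    exact h.choose_spec
  apply Finset.card_le_card_of_injOn F
  · intro m hm
    obtain ⟨h1, h2⟩ := hspec m hm
    rw [pairT, Finset.mem_coe, Finset.mem_filter, Finset.mem_product]
    refine ⟨⟨?_, ?_⟩, h1⟩
    · rw [Finset.mem_Icc]
      constructor <;> nlinarith [sq_nonneg (F m).1, sq_nonneg (F m).2, sq_nonneg ((F m).1 - d), sq_nonneg ((F m).1 + d), (by exact_mod_cast hd1 : (1:ℤ) ≤ (d:ℤ))]
    · rw [Finset.mem_Icc]
      constructor <;> nlinarith [sq_nonneg (F m).1, sq_nonneg (F m).2, sq_nonneg ((F m).2 - d), sq_nonneg ((F m).2 + d), (by exact_mod_cast hd1 : (1:ℤ) ≤ (d:ℤ))]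
  · intro m₁ hm₁ m₂ hm₂ hFe
    obtain ⟨h11, h12⟩ := hspec m₁ hm₁
    obtain ⟨h21, h22⟩ := hspec m₂ hm₂
    rw [hFe] at h12
    rw [Finset.mem_coe, Finset.mem_filter, Finset.mem_range] at hm₁ hm₂
    exact inj_lemma hd h21 hm₁.2 hm₂.2 h12 h22 hm₁.1 hm₂.1

theorem key_ineq (k : ℕ) (hk : 1 ≤ k) :
    (1:ℝ)/(k:ℝ)^3 ≤ 2/(k:ℝ)^2 - 2/((k:ℝ)+1)^2 := by
  have hk0 : (1:ℝ) ≤ (k:ℝ) := by exact_mod_cast hk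
  have h1 : (0:ℝ) < (k:ℝ) := by linarith
  have h2 : (0:ℝ) < (k:ℝ)+1 := by linarith
  rw [div_sub_div _ _ (by positivity) (by positivity), div_le_div_iff₀ (by positivity) (by positivity)]
  ring_nf
  nlinarith [sq_nonneg ((k:ℝ)), pow_pos h1 2, pow_pos h1 3]

theorem tele (a : ℕ) (ha : 1 ≤ a) (N : ℕ) :
    ∑ k ∈ Finset.Icc a N, (1:ℝ)/(k:ℝ)^3 ≤ 2/(a:ℝ)^2 - 2/((max (N+1) a : ℕ):ℝ)^2 := by
  induction N with
  | zero =>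
    rw [Finset.Icc_eq_empty (by omega)]
    simp only [Finset.sum_empty]
    have : max (0+1) a = a := by omega
    rw [this]
    simp
  | succ N ih =>
    by_cases h : a ≤ N+1
    · have hins : Finset.Icc a (N+1) = insert (N+1) (Finset.Icc a N) := by
        ext x
        simp only [Finset.mem_Icc, Finset.mem_insert]
        omega
      rw [hins, Finset.sum_insert (by simp)]
      have hmax1 : max (N+1) a = N+1 := by omega
      have hmax2 : max (N+1+1) a = N+1+1 := by omega
      rw [hmax1] at ih
      rw [hmax2]
      have := key_ineq (N+1) (by omega)
      push_cast at this ih ⊢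
      linarith
    · rw [Finset.Icc_eq_empty (by omega)]
      simp only [Finset.sum_empty]
      have h1 : max (N+1+1) a = a := by omega
      rw [h1]
      simp

theorem shell_card (k N : ℕ) (hk : 1 ≤ k) :
    (((Finset.Icc (-(N:ℤ)) N ×ˢ Finset.Icc (-(N:ℤ)) N)).filter
      (fun p : ℤ × ℤ => max p.1.natAbs p.2.natAbs = k)).card ≤ 8*k := by
  classical
  have hsub : (((Finset.Icc (-(N:ℤ)) N ×ˢ Finset.Icc (-(N:ℤ)) N)).filter
      (fun p : ℤ × ℤ => max p.1.natAbs p.2.natAbs = k)) ⊆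
      (Finset.Icc (-(k:ℤ)) k ×ˢ Finset.Icc (-(k:ℤ)) k) \
      (Finset.Icc (-((k:ℤ)-1)) ((k:ℤ)-1) ×ˢ Finset.Icc (-((k:ℤ)-1)) ((k:ℤ)-1)) := by
    intro p hp
    rw [Finset.mem_filter] at hp
    rw [Finset.mem_sdiff, Finset.mem_product, Finset.mem_product, Finset.mem_Icc, Finset.mem_Icc]
    simp only [Finset.mem_Icc]
    obtain ⟨_, h2⟩ := hp
    constructor
    · omega
    · intro hcon
      omega
  have := Finset.card_le_card hsub
  refine le_trans this ?_
  rw [Finset.card_sdiff_of_subset]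
  · rw [Finset.card_product, Finset.card_product, Int.card_Icc, Int.card_Icc]
    have e1 : ((k:ℤ) + 1 - -(k:ℤ)).toNat = 2*k+1 := by omega
    have e2 : (((k:ℤ)-1) + 1 - -((k:ℤ)-1)).toNat = 2*k-1 := by omega
    rw [e1, e2]
    cases' k with j
    · omega
    · have e3 : 2*(j+1)-1 = 2*j+1 := by omega
      rw [e3]
      have e4 : (2*(j+1)+1)*(2*(j+1)+1) = (2*j+1)*(2*j+1) + 8*(j+1) := by ring
      omega
  · refine Finset.product_subset_product ?_ ?_ <;> exact Finset.Icc_subset_Icc (by omega) (by omega)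

theorem main_finite (D : ℝ) (hD : 1 ≤ D) (N : ℕ) :
    ∑ d ∈ Finset.range N, (if D < (d:ℝ) then (rhoFn d : ℝ)/(d:ℝ)^2 else 0) ≤ 32/D := by
  classical
  have hD0 : (0:ℝ) < D := by linarith
  set box : Finset (ℤ×ℤ) := Finset.Icc (-(N:ℤ)) N ×ˢ Finset.Icc (-(N:ℤ)) N with hbox
  set S : ℕ → Finset (ℤ×ℤ) := fun d => box.filter (fun p => p.1^2+p.2^2 = (d:ℤ)) with hS
  set g : ℤ×ℤ → ℝ := fun p => 1/(((p.1^2+p.2^2 : ℤ)):ℝ)^2 with hg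
  have hg0 : ∀ p, 0 ≤ g p := fun p => by rw [hg]; positivity
  set A := (Finset.range N).filter (fun d : ℕ => D < (d:ℝ)) with hA
  rw [← Finset.sum_filter]
  -- Step 1: bound rho by the circle count
  have h1 : ∑ d ∈ A, (rhoFn d:ℝ)/(d:ℝ)^2 ≤ ∑ d ∈ A, ((S d).card : ℝ)/(d:ℝ)^2 := by
    refine Finset.sum_le_sum fun d hd => ?_
    rw [hA, Finset.mem_filter, Finset.mem_range] at hd
    have hd2 : (0:ℝ) < (d:ℝ)^2 := by nlinarith [hd.2]
    gcongr
    rcases Nat.even_or_odd d with he | ho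
    · rw [rho_even he]; positivity
    · have := rho_le_card ho
      have hsub : pairT d ⊆ S d := by
        intro p hp
        rw [pairT, Finset.mem_filter, Finset.mem_product, Finset.mem_Icc, Finset.mem_Icc] at hp
        rw [hS, Finset.mem_filter, hbox, Finset.mem_product, Finset.mem_Icc, Finset.mem_Icc]
        have hdN : d ≤ N := by omega
        obtain ⟨⟨⟨a1,a2⟩,⟨b1,b2⟩⟩, heq⟩ := hp
        refine ⟨⟨⟨?_,?_⟩,?_,?_⟩, heq⟩ <;> omega
      exact le_trans this (Finset.card_le_card hsub)
  refine le_trans h1 ?_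
  -- Step 2: rewrite as sum over pairs
  have h2 : ∑ d ∈ A, ((S d).card : ℝ)/(d:ℝ)^2 = ∑ d ∈ A, ∑ p ∈ S d, g p := by
    refine Finset.sum_congr rfl fun d hd => ?_
    have : ∀ p ∈ S d, g p = 1/(d:ℝ)^2 := by
      intro p hp
      rw [hS, Finset.mem_filter] at hp
      simp only [hg, hp.2]
      push_cast
      ring
    rw [Finset.sum_congr rfl this, Finset.sum_const, nsmul_eq_mul, mul_one_div]
  rw [h2]
  -- Step 3: biUnion
  have hdisj : (A : Set ℕ).PairwiseDisjoint S := by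
    intro d₁ _ d₂ _ hne
    refine Finset.disjoint_left.mpr fun p hp₁ hp₂ => ?_
    rw [hS, Finset.mem_filter] at hp₁ hp₂
    exact hne (by exact_mod_cast hp₁.2.symm.trans hp₂.2)
  rw [← Finset.sum_biUnion hdisj]
  -- Step 4: subset of the annulus
  set T : Finset (ℤ×ℤ) := box.filter (fun p => D < (((p.1^2+p.2^2 : ℤ)):ℝ)) with hT
  have hsub4 : A.biUnion S ⊆ T := by
    intro p hp
    rw [Finset.mem_biUnion] at hp
    obtain ⟨d, hdA, hpS⟩ := hp
    rw [hS, Finset.mem_filter] at hpS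
    rw [hA, Finset.mem_filter] at hdA
    rw [hT, Finset.mem_filter]
    refine ⟨hpS.1, ?_⟩
    rw [hpS.2]
    push_cast
    exact hdA.2
  refine le_trans (Finset.sum_le_sum_of_subset_of_nonneg hsub4 (fun p _ _ => hg0 p)) ?_
  -- Step 5: cover by shells
  set k₀ : ℕ := Nat.floor (Real.sqrt (D/2)) + 1 with hk₀
  set shell : ℕ → Finset (ℤ×ℤ) := fun k => box.filter (fun p => max p.1.natAbs p.2.natAbs = k) with hshell
  have hsub5 : T ⊆ (Finset.Icc k₀ N).biUnion shell := by
    intro p hp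
    rw [hT, Finset.mem_filter] at hp
    obtain ⟨hpbox, hpD⟩ := hp
    set k := max p.1.natAbs p.2.natAbs with hk
    have hbounds : -(N:ℤ) ≤ p.1 ∧ p.1 ≤ N ∧ -(N:ℤ) ≤ p.2 ∧ p.2 ≤ N := by
      rw [hbox, Finset.mem_product, Finset.mem_Icc, Finset.mem_Icc] at hpbox
      exact ⟨hpbox.1.1, hpbox.1.2, hpbox.2.1, hpbox.2.2⟩
    have hkN : k ≤ N := by omega
    have hk1 : 1 ≤ k := by
      by_contra hcon
      have h01 : p.1 = 0 := by omega
      have h02 : p.2 = 0 := by omega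
      rw [h01, h02] at hpD
      norm_num at hpD
      linarith
    have hxk : (p.1^2 + p.2^2 : ℤ) ≤ 2*(k:ℤ)^2 := by
      have b1 : -(k:ℤ) ≤ p.1 ∧ p.1 ≤ k := by omega
      have b2 : -(k:ℤ) ≤ p.2 ∧ p.2 ≤ k := by omega
      nlinarith [b1.1, b1.2, b2.1, b2.2]
    have hk₀k : k₀ ≤ k := by
      have hxr : D < 2*(k:ℝ)^2 := by
        refine lt_of_lt_of_le hpD ?_
        exact_mod_cast hxk
      have hsq : Real.sqrt (D/2) < (k:ℝ) := by
        rw [Real.sqrt_lt' (by exact_mod_cast hk1)]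
        linarith
      have := (Nat.floor_lt (Real.sqrt_nonneg _)).mpr hsq
      omega
    rw [Finset.mem_biUnion]
    exact ⟨k, Finset.mem_Icc.mpr ⟨hk₀k, hkN⟩, by rw [hshell, Finset.mem_filter]; exact ⟨hpbox, rfl⟩⟩
  have hdisj5 : ((Finset.Icc k₀ N : Finset ℕ) : Set ℕ).PairwiseDisjoint shell := by
    intro k₁ _ k₂ _ hne
    refine Finset.disjoint_left.mpr fun p hp₁ hp₂ => ?_
    rw [hshell, Finset.mem_filter] at hp₁ hp₂
    exact hne (hp₁.2.symm.trans hp₂.2)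
  refine le_trans (Finset.sum_le_sum_of_subset_of_nonneg hsub5 (fun p _ _ => hg0 p)) ?_
  rw [Finset.sum_biUnion hdisj5]
  -- Step 6: per-shell bound
  have h6 : ∀ k ∈ Finset.Icc k₀ N, ∑ p ∈ shell k, g p ≤ 8 * (1/(k:ℝ)^3) := by
    intro k hk
    have hk1 : 1 ≤ k := by
      rw [Finset.mem_Icc] at hk
      omega
    have hkr : (1:ℝ) ≤ (k:ℝ) := by exact_mod_cast hk1
    have hbound : ∀ p ∈ shell k, g p ≤ 1/(k:ℝ)^4 := by
      intro p hp
      rw [hshell, Finset.mem_filter] at hp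
      have hx : (k:ℤ)^2 ≤ p.1^2 + p.2^2 := by
        rcases max_choice p.1.natAbs p.2.natAbs with hm | hm <;> rw [hm] at hp
        · rw [← hp.2, Int.natAbs_sq]
          nlinarith [sq_nonneg p.2]
        · rw [← hp.2, Int.natAbs_sq]
          nlinarith [sq_nonneg p.1]
      have hxr : (k:ℝ)^2 ≤ (((p.1^2+p.2^2 : ℤ)):ℝ) := by exact_mod_cast hx
      rw [hg]
      have hk2 : (0:ℝ) < (k:ℝ)^2 := by positivity
      rw [div_le_div_iff₀ (by nlinarith) (by positivity)]
      nlinarith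
    calc ∑ p ∈ shell k, g p ≤ (shell k).card • (1/(k:ℝ)^4) :=
          Finset.sum_le_card_nsmul _ _ _ hbound
      _ ≤ (8*k : ℕ) • (1/(k:ℝ)^4) := by
          refine nsmul_le_nsmul_left (by positivity) ?_
          rw [hshell]
          exact shell_card k N hk1
      _ = 8 * (1/(k:ℝ)^3) := by
          rw [nsmul_eq_mul]
          push_cast
          field_simp
  refine le_trans (Finset.sum_le_sum h6) ?_
  -- Step 7: telescope
  rw [← Finset.mul_sum]
  have h7 := tele k₀ (by omega) N
  have hk₀sq : D/2 < (k₀:ℝ)^2 := by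
    have h := Nat.lt_floor_add_one (Real.sqrt (D/2))
    have hs : Real.sqrt (D/2) < (k₀:ℝ) := by
      rw [hk₀]
      push_cast
      exact h
    nlinarith [Real.sq_sqrt (by linarith : (0:ℝ) ≤ D/2), Real.sqrt_nonneg (D/2)]
  have hk₀pos : (0:ℝ) < (k₀:ℝ)^2 := by
    have : (1:ℕ) ≤ k₀ := by omega
    have : (1:ℝ) ≤ (k₀:ℝ) := by exact_mod_cast this
    positivity
  have h8 : 2/(k₀:ℝ)^2 ≤ 4/D := by
    rw [div_le_div_iff₀ hk₀pos hD0]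
    nlinarith
  have h9 : ∑ k ∈ Finset.Icc k₀ N, (1:ℝ)/(k:ℝ)^3 ≤ 2/(k₀:ℝ)^2 := by
    refine le_trans h7 ?_
    have : (0:ℝ) ≤ 2/((max (N+1) k₀ : ℕ):ℝ)^2 := by positivity
    linarith
  calc 8 * ∑ k ∈ Finset.Icc k₀ N, (1:ℝ)/(k:ℝ)^3 ≤ 8 * (2/(k₀:ℝ)^2) := by linarith
    _ ≤ 8 * (4/D) := by linarith
    _ = 32/D := by ring


/-- `∑_{d > D} ρ(d)/d² ≪ 1/D`. -/
theorem rhoFn_tail_sum_bound :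
    Summable (fun d : ℕ => (rhoFn d : ℝ) / (d : ℝ) ^ 2) ∧
    ∃ C : ℝ, ∀ D : ℝ, 1 ≤ D →
      (∑' d : {d : ℕ // D < (d : ℝ)}, (rhoFn d : ℝ) / ((d : ℕ) : ℝ) ^ 2) ≤ C / D := by
  classical
  set g : ℕ → ℝ := fun d => (rhoFn d : ℝ) / (d : ℝ) ^ 2 with hgdef
  have hg0 : ∀ d : ℕ, 0 ≤ g d := fun d => by rw [hgdef]; positivity
  have hrho1 : rhoFn 1 = 1 := by decide
  have hpt : ∀ n : ℕ, ∑ d ∈ Finset.range n, g d ≤ 33 := by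
    intro n
    have hb := main_finite 1 le_rfl n
    have hsplit : ∀ d : ℕ, g d ≤ (if (1:ℝ) < (d:ℝ) then g d else 0) + (if d = 1 then 1 else 0) := by
      intro d
      match d with
      | 0 => simp [hgdef]
      | 1 => simp [hgdef, hrho1]
      | (n+2) =>
        have h2 : (1:ℝ) < ((n+2 : ℕ):ℝ) := by push_cast; linarith
        rw [if_pos h2, if_neg (by omega)]
        simp
    calc ∑ d ∈ Finset.range n, g d
        ≤ ∑ d ∈ Finset.range n, ((if (1:ℝ) < (d:ℝ) then g d else 0) + (if d = 1 then 1 else 0)) :=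
          Finset.sum_le_sum fun d _ => hsplit d
      _ = (∑ d ∈ Finset.range n, (if (1:ℝ) < (d:ℝ) then g d else 0)) +
          (∑ d ∈ Finset.range n, (if d = 1 then (1:ℝ) else 0)) := Finset.sum_add_distrib
      _ ≤ 32/1 + 1 := by
          refine add_le_add hb ?_
          rw [Finset.sum_ite_eq' (Finset.range n) 1 (fun _ => (1:ℝ))]
          split <;> norm_num
      _ = 33 := by norm_num
  have hsum : Summable g := summable_of_sum_range_le hg0 hpt
  refine ⟨hsum, 32, fun D hD => ?_⟩
  have heq : (∑' d : {d : ℕ // D < (d : ℝ)}, g d) = ∑' d : ℕ, Set.indicator {d : ℕ | D < (d:ℝ)} g d :=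
    tsum_subtype {d : ℕ | D < (d:ℝ)} g
  rw [heq]
  have hind : ∀ d : ℕ, Set.indicator {d : ℕ | D < (d:ℝ)} g d = (if D < (d:ℝ) then g d else 0) := by
    intro d
    simp [Set.indicator_apply, Set.mem_setOf_eq]
  refine Real.tsum_le_of_sum_range_le (fun d => ?_) (fun n => ?_)
  · rw [hind]
    split
    · exact hg0 d
    · exact le_refl 0
  · calc ∑ i ∈ Finset.range n, Set.indicator {d : ℕ | D < (d:ℝ)} g i
        = ∑ i ∈ Finset.range n, (if D < (i:ℝ) then g i else 0) :=
          Finset.sum_congr rfl fun i _ => hind i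
      _ ≤ 32/D := main_finite D hD n
end

section
/- The series ∑_{d=1}^∞ μ(d)·ρ(d)/d² converges absolutely and equals the Euler product ∏_p (1 − ρ(p)·p^{-2}) over all primes p, which in turn equals ∏_{p prime, p ≡ 1 (mod 4)} (1 − 2p^{-2}). Here μ is the Möbius function and ρ(d) denotes the number of residue classes m modulo d² such that d² divides m²+1. -/
open ArithmeticFunction

/-- Solution count in `ZMod n`. -/
def solCard (n : ℕ) [NeZero n] : ℕ :=
  (Finset.univ.filter (fun x : ZMod n => x ^ 2 + 1 = 0)).card

lemma rhoFn_eq_solCard (d : ℕ) (hd : d ≠ 0) :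
    haveI : NeZero (d ^ 2) := ⟨pow_ne_zero _ hd⟩
    rhoFn d = solCard (d ^ 2) := by
  haveI : NeZero (d ^ 2) := ⟨pow_ne_zero _ hd⟩
  rw [rhoFn, solCard]
  refine Finset.card_bij (fun m _ => ((m : ZMod (d ^ 2)))) ?_ ?_ ?_
  · intro m hm
    simp only [Finset.mem_filter, Finset.mem_range] at hm
    simp only [Finset.mem_filter, Finset.mem_univ, true_and]
    have : ((m ^ 2 + 1 : ℕ) : ZMod (d ^ 2)) = 0 := by
      rw [ZMod.natCast_eq_zero_iff]; exact hm.2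
    push_cast at this
    exact this
  · intro a ha b hb hab
    simp only [Finset.mem_filter, Finset.mem_range] at ha hb
    rwa [ZMod.natCast_eq_natCast_iff', Nat.mod_eq_of_lt ha.1, Nat.mod_eq_of_lt hb.1] at hab
  · intro x hx
    simp only [Finset.mem_filter, Finset.mem_univ, true_and] at hx
    refine ⟨x.val, ?_, ?_⟩
    · simp only [Finset.mem_filter, Finset.mem_range]
      refine ⟨ZMod.val_lt x, ?_⟩
      rw [← ZMod.natCast_eq_zero_iff]
      push_cast
      rw [ZMod.natCast_zmod_val]
      exact hx
    · simp [ZMod.natCast_zmod_val]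

lemma solCard_mul (m n : ℕ) [NeZero m] [NeZero n] (h : Nat.Coprime m n) :
    haveI : NeZero (m * n) := ⟨mul_ne_zero (NeZero.ne m) (NeZero.ne n)⟩
    solCard (m * n) = solCard m * solCard n := by
  haveI : NeZero (m * n) := ⟨mul_ne_zero (NeZero.ne m) (NeZero.ne n)⟩
  let e := ZMod.chineseRemainder h
  rw [solCard, solCard, solCard, ← Finset.card_product]
  refine Finset.card_bij' (fun x _ => e x) (fun y _ => e.symm y) ?_ ?_ ?_ ?_
  · intro x hx
    simp only [Finset.mem_filter, Finset.mem_univ, true_and] at hx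
    have h1 : e (x ^ 2 + 1) = 0 := by rw [hx, _root_.map_zero]
    rw [map_add, map_pow, map_one] at h1
    simp only [Finset.mem_product, Finset.mem_filter, Finset.mem_univ, true_and]
    constructor
    · have := congrArg Prod.fst h1
      simpa using this
    · have := congrArg Prod.snd h1
      simpa using this
  · intro y hy
    simp only [Finset.mem_product, Finset.mem_filter, Finset.mem_univ, true_and] at hy
    simp only [Finset.mem_filter, Finset.mem_univ, true_and]
    apply e.injective
    rw [map_add, map_pow, _root_.map_zero]
    ext
    · simpa using hy.1
    · simpa using hy.2
  · intro x _; exact e.symm_apply_apply x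
  · intro y _; exact e.apply_symm_apply y

lemma rhoFn_mul (m n : ℕ) (h : Nat.Coprime m n) :
    rhoFn (m * n) = rhoFn m * rhoFn n := by
  rcases eq_or_ne m 0 with rfl | hm
  · have : n = 1 := by simpa [Nat.coprime_zero_left] using h
    subst this; simp [rhoFn]
  rcases eq_or_ne n 0 with rfl | hn
  · have : m = 1 := by simpa [Nat.coprime_zero_right] using h
    subst this; simp [rhoFn]
  haveI : NeZero (m ^ 2) := ⟨pow_ne_zero _ hm⟩
  haveI : NeZero (n ^ 2) := ⟨pow_ne_zero _ hn⟩
  rw [rhoFn_eq_solCard m hm, rhoFn_eq_solCard n hn,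
    rhoFn_eq_solCard (m * n) (mul_ne_zero hm hn)]
  have h2 : (m * n) ^ 2 = m ^ 2 * n ^ 2 := mul_pow m n 2
  have hcop : Nat.Coprime (m ^ 2) (n ^ 2) := Nat.Coprime.pow 2 2 h
  haveI : NeZero ((m * n) ^ 2) := ⟨pow_ne_zero _ (mul_ne_zero hm hn)⟩
  simp only [h2]
  exact solCard_mul (m ^ 2) (n ^ 2) hcop

lemma rhoFn_two : rhoFn 2 = 0 := by decide

lemma rhoFn_prime_of_ne_one {p : ℕ} (hp : p.Prime) (h3 : p % 4 = 3) : rhoFn p = 0 := by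
  haveI : Fact p.Prime := ⟨hp⟩
  rw [rhoFn, Finset.card_eq_zero, Finset.filter_eq_empty_iff]
  intro m _
  intro hdvd
  have hpd : p ∣ m ^ 2 + 1 := dvd_trans (dvd_pow_self p two_ne_zero) hdvd
  have hsq : IsSquare (-1 : ZMod p) := by
    refine ⟨(m : ZMod p), ?_⟩
    have : ((m ^ 2 + 1 : ℕ) : ZMod p) = 0 := by
      rw [ZMod.natCast_eq_zero_iff]; exact hpd
    push_cast at this
    linear_combination -this
  have := ZMod.exists_sq_eq_neg_one_iff.mp hsq
  exact this h3

lemma exists_int_sq {p : ℕ} (hp : p.Prime) (h1 : p % 4 = 1) :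
    ∃ i : ℤ, ((p : ℤ)) ^ 2 ∣ i ^ 2 + 1 := by
  haveI : Fact p.Prime := ⟨hp⟩
  have hodd : p ≠ 2 := by omega
  obtain ⟨a0, ha0⟩ := ZMod.exists_sq_eq_neg_one_iff.mpr (by omega : p % 4 ≠ 3)
  -- -1 = a0 * a0
  set a : ℤ := (a0.val : ℤ) with ha_def
  have hcast_a : ((a : ZMod p)) = a0 := by
    rw [ha_def]; push_cast; exact ZMod.natCast_zmod_val a0
  have hpa : (p : ℤ) ∣ a ^ 2 + 1 := by
    rw [← ZMod.intCast_zmod_eq_zero_iff_dvd]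
    push_cast
    rw [hcast_a]
    linear_combination -ha0
  obtain ⟨k, hk⟩ := hpa
  have h2a : (2 * a0 : ZMod p) ≠ 0 := by
    intro h
    have h2 : (2 : ZMod p) ≠ 0 := by
      intro h2
      have := (ZMod.natCast_eq_zero_iff 2 p).mp (by exact_mod_cast h2)
      exact hodd (((Nat.prime_dvd_prime_iff_eq hp Nat.prime_two).mp this))
    have ha0ne : a0 ≠ 0 := by
      intro h0
      rw [h0, mul_zero] at ha0
      exact one_ne_zero (neg_eq_zero.mp ha0)
    exact (mul_ne_zero h2 ha0ne) h
  set tz : ZMod p := -((k : ZMod p) * (2 * a0)⁻¹) with htz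
  set t : ℤ := (tz.val : ℤ) with ht_def
  have hcast_t : ((t : ZMod p)) = tz := by
    rw [ht_def]; push_cast; exact ZMod.natCast_zmod_val tz
  refine ⟨a + t * p, ?_⟩
  have hkey : (p : ℤ) ∣ k + 2 * a * t := by
    rw [← ZMod.intCast_zmod_eq_zero_iff_dvd]
    push_cast
    rw [hcast_a, hcast_t, htz]
    field_simp
    rw [div_self h2a, add_neg_cancel, mul_zero]
  obtain ⟨c, hc⟩ := hkey
  refine ⟨c + t ^ 2, ?_⟩
  have : k + 2 * a * t = p * c := hc
  linear_combination hk + (p : ℤ) * this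

lemma rhoFn_prime_of_one {p : ℕ} (hp : p.Prime) (h1 : p % 4 = 1) : rhoFn p = 2 := by
  have hp5 : 5 ≤ p := by
    have := hp.two_le
    omega
  haveI : NeZero (p ^ 2) := ⟨pow_ne_zero _ hp.ne_zero⟩
  obtain ⟨i, hi⟩ := exists_int_sq hp h1
  have hq : Prime ((p : ℤ)) := Nat.prime_iff_prime_int.mp hp
  rw [rhoFn_eq_solCard p hp.ne_zero, solCard]
  set ι : ZMod (p ^ 2) := ((i : ℤ) : ZMod (p ^ 2)) with hι_def
  have hι : ι ^ 2 + 1 = 0 := by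
    have : ((i ^ 2 + 1 : ℤ) : ZMod (p ^ 2)) = 0 := by
      rw [ZMod.intCast_zmod_eq_zero_iff_dvd]
      exact_mod_cast hi
    push_cast at this
    exact this
  have hne : ι ≠ -ι := by
    intro h
    have h2ι : (2 : ZMod (p ^ 2)) * ι = 0 := by linear_combination h
    have h2 : (2 : ZMod (p ^ 2)) = 0 := by
      have : (2 : ZMod (p ^ 2)) * (ι ^ 2) = 0 := by
        linear_combination ι * h2ι
      rw [show ι ^ 2 = -1 by linear_combination hι] at this
      linear_combination -this
    have : (p : ℕ) ^ 2 ∣ 2 := by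
      rw [← ZMod.natCast_eq_zero_iff]
      push_cast
      exact h2
    have := Nat.le_of_dvd (by norm_num) this
    nlinarith
  have hset : (Finset.univ.filter (fun x : ZMod (p ^ 2) => x ^ 2 + 1 = 0)) = {ι, -ι} := by
    ext x
    simp only [Finset.mem_filter, Finset.mem_univ, true_and, Finset.mem_insert,
      Finset.mem_singleton]
    constructor
    · intro hx
      set X : ℤ := (x.val : ℤ) with hX_def
      have hcast_X : ((X : ZMod (p ^ 2))) = x := by
        rw [hX_def]; push_cast; exact ZMod.natCast_zmod_val x
      have hdX : ((p : ℤ)) ^ 2 ∣ X ^ 2 + 1 := by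
        have h0 : ((X ^ 2 + 1 : ℤ) : ZMod (p ^ 2)) = 0 := by
          push_cast
          rw [hcast_X]
          exact_mod_cast hx
        have := (ZMod.intCast_zmod_eq_zero_iff_dvd (X ^ 2 + 1) (p ^ 2)).mp h0
        exact_mod_cast this
      have hdiff : ((p : ℤ)) ^ 2 ∣ (X - i) * (X + i) := by
        have : (X - i) * (X + i) = (X ^ 2 + 1) - (i ^ 2 + 1) := by ring
        rw [this]
        exact dvd_sub hdX hi
      have hnotboth : ¬ ((p : ℤ) ∣ X - i ∧ (p : ℤ) ∣ X + i) := by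
        rintro ⟨hd1, hd2⟩
        have h2i : (p : ℤ) ∣ 2 * i := by
          have : 2 * i = (X + i) - (X - i) := by ring
          rw [this]; exact dvd_sub hd2 hd1
        rcases hq.dvd_or_dvd h2i with h | h
        · have : (p : ℤ) ∣ (2 : ℤ) := h
          have h2' : p ∣ 2 := by exact_mod_cast this
          have := Nat.le_of_dvd (by norm_num) h2'
          omega
        · have hpi : (p : ℤ) ∣ i ^ 2 := by rw [sq]; exact h.mul_left i
          have hp1 : (p : ℤ) ∣ 1 := by
            have hpi1 : (p : ℤ) ∣ i ^ 2 + 1 := dvd_trans (dvd_pow_self _ two_ne_zero) hi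
            have := dvd_sub hpi1 hpi
            simpa using this
          have := Int.le_of_dvd one_pos hp1
          omega
      by_cases hcase : (p : ℤ) ∣ X - i
      · left
        have hnd : ¬ (p : ℤ) ∣ X + i := fun h => hnotboth ⟨hcase, h⟩
        have : ((p : ℤ)) ^ 2 ∣ X - i := hq.pow_dvd_of_dvd_mul_right 2 hnd hdiff
        have : ((X - i : ℤ) : ZMod (p ^ 2)) = 0 := by
          rw [ZMod.intCast_zmod_eq_zero_iff_dvd]
          exact_mod_cast this
        push_cast at this
        rw [hcast_X] at this
        linear_combination this
      · right
        have : ((p : ℤ)) ^ 2 ∣ X + i := hq.pow_dvd_of_dvd_mul_left 2 hcase hdiff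
        have : ((X + i : ℤ) : ZMod (p ^ 2)) = 0 := by
          rw [ZMod.intCast_zmod_eq_zero_iff_dvd]
          exact_mod_cast this
        push_cast at this
        rw [hcast_X] at this
        linear_combination this
    · rintro (rfl | rfl)
      · exact hι
      · linear_combination hι
  rw [hset]
  rw [Finset.card_insert_of_notMem (by simpa using hne), Finset.card_singleton]

lemma rhoFn_one : rhoFn 1 = 1 := by decide

lemma rhoFn_zero : rhoFn 0 = 0 := by decide

lemma rhoFn_prime_sq_le {p : ℕ} (hp : p.Prime) : rhoFn p ^ 2 ≤ p := by
  have h2 := hp.two_le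
  rcases Nat.lt_or_ge p 5 with h | h
  · interval_cases p
    · rw [rhoFn_two]; norm_num
    · rw [rhoFn_prime_of_ne_one hp (by norm_num)]; norm_num
    · exact absurd hp (by decide)
  · have h4 : p % 4 = 1 ∨ p % 4 = 3 := by
      have hodd : ¬ (2 ∣ p) := by
        intro h2d
        have := (Nat.prime_dvd_prime_iff_eq Nat.prime_two hp).mp h2d
        omega
      omega
    rcases h4 with h4 | h4
    · rw [rhoFn_prime_of_one hp h4]; nlinarith
    · rw [rhoFn_prime_of_ne_one hp h4]; nlinarith

lemma rhoFn_prod_primes (s : Finset ℕ) (hs : ∀ p ∈ s, p.Prime) :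
    rhoFn (∏ p ∈ s, p) = ∏ p ∈ s, rhoFn p := by
  induction s using Finset.induction_on with
  | empty => simp [rhoFn_one]
  | @insert a s ha ih =>
    rw [Finset.prod_insert ha, Finset.prod_insert ha]
    have hap : a.Prime := hs a (Finset.mem_insert_self a s)
    have hcop : Nat.Coprime a (∏ p ∈ s, p) := by
      rw [Nat.Prime.coprime_iff_not_dvd hap]
      intro hdvd
      obtain ⟨q, hq, hdq⟩ := hap.prime.exists_mem_finset_dvd hdvd
      have hqp : q.Prime := hs q (Finset.mem_insert_of_mem hq)
      have : a = q := ((Nat.prime_dvd_prime_iff_eq hap hqp).mp hdq)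
      exact ha (this ▸ hq)
    rw [rhoFn_mul a _ hcop, ih (fun p hp => hs p (Finset.mem_insert_of_mem hp))]

lemma rhoFn_sq_le_of_squarefree {d : ℕ} (hd : Squarefree d) : rhoFn d ^ 2 ≤ d := by
  have h := Nat.prod_primeFactors_of_squarefree hd
  have h1 : rhoFn d = ∏ p ∈ d.primeFactors, rhoFn p := by
    have := rhoFn_prod_primes d.primeFactors (fun p hp => Nat.prime_of_mem_primeFactors hp)
    rwa [h] at this
  rw [h1, ← Finset.prod_pow]
  conv_rhs => rw [← h]
  exact Finset.prod_le_prod' (fun p hp => rhoFn_prime_sq_le (Nat.prime_of_mem_primeFactors hp))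

open ArithmeticFunction in
lemma abs_f_le (d : ℕ) :
    |(moebius d : ℝ) * (rhoFn d : ℝ) / (d : ℝ) ^ 2| ≤ (d : ℝ) ^ (-(3/2) : ℝ) := by
  rcases eq_or_ne d 0 with rfl | hd0
  · simp [Real.zero_rpow (by norm_num : (-(3/2) : ℝ) ≠ 0)]
  rcases eq_or_ne (moebius d) 0 with h0 | h0
  · simp [h0]
    positivity
  have hsf : Squarefree d := moebius_ne_zero_iff_squarefree.mp h0
  have hd1 : (1 : ℝ) ≤ (d : ℝ) := by exact_mod_cast Nat.one_le_iff_ne_zero.mpr hd0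
  have hdpos : (0 : ℝ) < (d : ℝ) := by linarith
  have habs : |(moebius d : ℝ)| = 1 := by
    have := abs_moebius_eq_one_of_squarefree hsf
    rw [← Int.cast_abs, this, Int.cast_one]
  have hsq : (rhoFn d : ℝ) ≤ Real.sqrt d := by
    rw [Real.le_sqrt (by positivity) (by positivity)]
    exact_mod_cast rhoFn_sq_le_of_squarefree hsf
  rw [abs_div, abs_mul, habs, one_mul, abs_of_nonneg (by positivity : (0:ℝ) ≤ (rhoFn d : ℝ)),
    abs_of_nonneg (by positivity : (0:ℝ) ≤ (d : ℝ) ^ 2)]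
  have : Real.sqrt d / (d : ℝ) ^ 2 = (d : ℝ) ^ (-(3/2) : ℝ) := by
    rw [Real.sqrt_eq_rpow, ← Real.rpow_natCast (d : ℝ) 2, ← Real.rpow_sub hdpos]
    norm_num
  rw [← this]
  gcongr

open ArithmeticFunction in
lemma summable_abs_f :
    Summable (fun d : ℕ => |(moebius d : ℝ) * (rhoFn d : ℝ) / (d : ℝ) ^ 2|) := by
  refine Summable.of_nonneg_of_le (fun d => abs_nonneg _) abs_f_le ?_
  exact Real.summable_nat_rpow.mpr (by norm_num)

open ArithmeticFunction in
lemma f_mul {m n : ℕ} (h : Nat.Coprime m n) :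
    (moebius (m * n) : ℝ) * (rhoFn (m * n) : ℝ) / ((m * n : ℕ) : ℝ) ^ 2 =
      ((moebius m : ℝ) * (rhoFn m : ℝ) / (m : ℝ) ^ 2) *
      ((moebius n : ℝ) * (rhoFn n : ℝ) / (n : ℝ) ^ 2) := by
  rcases eq_or_ne m 0 with rfl | hm
  · have : n = 1 := by simpa [Nat.coprime_zero_left] using h
    subst this; simp
  rcases eq_or_ne n 0 with rfl | hn
  · have : m = 1 := by simpa [Nat.coprime_zero_right] using h
    subst this; simp
  rw [isMultiplicative_moebius.map_mul_of_coprime h, rhoFn_mul m n h]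
  push_cast
  field_simp

open ArithmeticFunction in
lemma tsum_local (p : ℕ) (hp : p.Prime) :
    (∑' e : ℕ, (moebius (p ^ e) : ℝ) * (rhoFn (p ^ e) : ℝ) / ((p ^ e : ℕ) : ℝ) ^ 2) =
      1 - (rhoFn p : ℝ) / (p : ℝ) ^ 2 := by
  rw [tsum_eq_sum (s := {0, 1}) ?h]
  · rw [Finset.sum_insert (by norm_num), Finset.sum_singleton]
    simp only [pow_zero, pow_one]
    rw [moebius_apply_one, rhoFn_one, moebius_apply_prime hp]
    push_cast
    have hp0 : (0:ℝ) < (p:ℝ) := by exact_mod_cast hp.pos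
    field_simp
    ring
  case h =>
    intro e he
    simp only [Finset.mem_insert, Finset.mem_singleton] at he
    push_neg at he
    rw [moebius_apply_prime_pow hp he.1, if_neg he.2]
    simp

/-- `∑_d μ(d) ρ(d)/d²` converges absolutely and equals the Euler product
`∏_p (1 − ρ(p) p⁻²) = ∏_{p ≡ 1 (mod 4)} (1 − 2 p⁻²)`. -/
theorem moebius_rhoFn_euler_product :
    Summable (fun d : ℕ => |(moebius d : ℝ) * (rhoFn d : ℝ) / (d : ℝ) ^ 2|) ∧
    Multipliable (fun p : Nat.Primes => (1 - (rhoFn p : ℝ) / ((p : ℕ) : ℝ) ^ 2)) ∧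
    (∑' d : ℕ, (moebius d : ℝ) * (rhoFn d : ℝ) / (d : ℝ) ^ 2) =
      (∏' p : Nat.Primes, (1 - (rhoFn p : ℝ) / ((p : ℕ) : ℝ) ^ 2)) ∧
    (∏' p : Nat.Primes, (1 - (rhoFn p : ℝ) / ((p : ℕ) : ℝ) ^ 2)) =
      (∏' p : {p : ℕ // p.Prime ∧ p % 4 = 1}, (1 - 2 / ((p : ℕ) : ℝ) ^ 2)) := by
  set F : ℕ → ℝ := fun d => (moebius d : ℝ) * (rhoFn d : ℝ) / (d : ℝ) ^ 2 with hF
  have hsum : Summable (fun d => ‖F d‖) := by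
    simpa [Real.norm_eq_abs] using summable_abs_f
  have hf1 : F 1 = 1 := by simp [hF, rhoFn_one]
  have hf0 : F 0 = 0 := by simp [hF]
  have hmul : ∀ {m n : ℕ}, Nat.Coprime m n → F (m * n) = F m * F n := by
    intro m n h
    simpa [hF] using f_mul h
  have hHP := EulerProduct.eulerProduct_hasProd hf1 hmul hsum hf0
  have hfun : (fun p : Nat.Primes => ∑' e : ℕ, F ((p : ℕ) ^ e)) =
      fun p : Nat.Primes => (1 - (rhoFn p : ℝ) / ((p : ℕ) : ℝ) ^ 2) := by
    funext p
    exact tsum_local p p.2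
  rw [hfun] at hHP
  refine ⟨summable_abs_f, hHP.multipliable, hHP.tprod_eq.symm, ?_⟩
  -- last equality
  have hinj : Function.Injective
      (fun q : {p : ℕ // p.Prime ∧ p % 4 = 1} => (⟨q.1, q.2.1⟩ : Nat.Primes)) := by
    intro a b hab
    have : (a : ℕ) = (b : ℕ) := congrArg (fun q : Nat.Primes => (q : ℕ)) hab
    exact Subtype.ext this
  have hsupp : Function.mulSupport
      (fun p : Nat.Primes => 1 - (rhoFn (p : ℕ) : ℝ) / ((p : ℕ) : ℝ) ^ 2) ⊆
      Set.range (fun q : {p : ℕ // p.Prime ∧ p % 4 = 1} => (⟨q.1, q.2.1⟩ : Nat.Primes)) := by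
    intro p hp
    simp only [Function.mem_mulSupport] at hp
    have hne : rhoFn (p : ℕ) ≠ 0 := by
      intro h0
      apply hp
      rw [h0]
      simp
    have hpp : (p : ℕ).Prime := p.2
    have h41 : (p : ℕ) % 4 = 1 := by
      rcases eq_or_ne (p : ℕ) 2 with h2 | h2
      · exact absurd (h2 ▸ rhoFn_two) hne
      have hodd : ¬ 2 ∣ (p : ℕ) := fun hd =>
        h2 ((Nat.prime_dvd_prime_iff_eq Nat.prime_two hpp).mp hd).symm
      have h13 : (p : ℕ) % 4 = 1 ∨ (p : ℕ) % 4 = 3 := by omega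
      rcases h13 with h | h
      · exact h
      · exact absurd (rhoFn_prime_of_ne_one hpp h) hne
    exact ⟨⟨(p : ℕ), hpp, h41⟩, rfl⟩
  refine (Function.Injective.tprod_eq hinj
    (f := fun p : Nat.Primes => 1 - (rhoFn (p : ℕ) : ℝ) / ((p : ℕ) : ℝ) ^ 2)
    hsupp).symm.trans (tprod_congr ?_)
  intro q
  simp only
  rw [rhoFn_prime_of_one q.2.1 q.2.2]
  norm_num
end

section
/- Let e, f, n be positive integers with e²·f = n²+1. Then there exist integers x₁, x₂, y₁, y₂ such that e = x₁² + x₂², f = y₁² + y₂², and (x₁ + i·x₂)²·(y₁ + i·y₂) = n + i in the ring ℤ[i] of Gaussian integers; in particular, taking imaginary parts, 2·x₁·x₂·y₁ + (x₁² − x₂²)·y₂ = 1. -/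
set_option synthInstance.maxHeartbeats 1000000
set_option maxHeartbeats 1000000

open Zsqrtd

lemma gauss_prime_of_norm_prime (z : GaussianInt) (hz : Prime z.norm) : Prime z := by
  rw [← irreducible_iff_prime]
  constructor
  · intro hu
    exact hz.not_unit (by rw [Int.isUnit_iff_natAbs_eq, Zsqrtd.norm_eq_one_iff]; exact hu)
  · intro a b hab
    have h := congrArg Zsqrtd.norm hab
    rw [Zsqrtd.norm_mul] at h
    rcases (hz.irreducible.isUnit_or_isUnit h) with h' | h'
    · exact Or.inl (Zsqrtd.norm_eq_one_iff.mp (Int.isUnit_iff_natAbs_eq.mp h'))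
    · exact Or.inr (Zsqrtd.norm_eq_one_iff.mp (Int.isUnit_iff_natAbs_eq.mp h'))

lemma two_dvd_of_four_dvd_sq_add_sq (a b : ℤ) (h : (4:ℤ) ∣ a^2 + b^2) : 2 ∣ a := by
  have h4 : ((a:ZMod 4))^2 + (b:ZMod 4)^2 = 0 := by
    have := (ZMod.intCast_zmod_eq_zero_iff_dvd (a^2+b^2) 4).mpr h
    push_cast at this
    linear_combination this
  have hx : (a : ZMod 4) = 0 ∨ (a : ZMod 4) = 2 := by
    revert h4; generalize (a:ZMod 4) = x; generalize (b:ZMod 4) = y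
    revert x y; decide
  rcases hx with h' | h'
  · have := (ZMod.intCast_zmod_eq_zero_iff_dvd a 4).mp h'
    exact dvd_trans (by norm_num) this
  · have h2 : ((a - 2 : ℤ) : ZMod 4) = 0 := by push_cast [h']; ring
    have := (ZMod.intCast_zmod_eq_zero_iff_dvd _ 4).mp h2
    omega

lemma gauss_not_dvd_conj (a b : ℤ) (p : ℕ) (hp : p.Prime) (hp2 : p ≠ 2)
    (hnorm : a^2 + b^2 = p) : ¬ ((⟨a,b⟩ : GaussianInt) ∣ ⟨a,-b⟩) := by
  rintro ⟨u, hu⟩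
  have hpZ : Prime (p : ℤ) := Int.prime_iff_natAbs_prime.mpr (by simpa using hp)
  have hnz : ((⟨a,b⟩ : GaussianInt)).norm = p := by
    simp [Zsqrtd.norm_def]; linear_combination hnorm
  have hnz' : ((⟨a,-b⟩ : GaussianInt)).norm = p := by
    simp [Zsqrtd.norm_def]; linear_combination hnorm
  have hn := congrArg Zsqrtd.norm hu
  rw [Zsqrtd.norm_mul, hnz, hnz'] at hn
  have hp0 : (p:ℤ) ≠ 0 := by exact_mod_cast hp.ne_zero
  have hu1 : u.norm = 1 := by
    have := mul_left_cancel₀ hp0 (by linarith [hn] : (p:ℤ) * 1 = (p:ℤ) * u.norm)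
    omega
  have hre : u.re^2 + u.im^2 = 1 := by
    have hd := Zsqrtd.norm_def u
    nlinarith [hu1, hd]
  have h1 : -1 ≤ u.re := by nlinarith [sq_nonneg (u.re+1), sq_nonneg u.im]
  have h2 : u.re ≤ 1 := by nlinarith [sq_nonneg (u.re-1), sq_nonneg u.im]
  have h3 : -1 ≤ u.im := by nlinarith [sq_nonneg (u.im+1), sq_nonneg u.re]
  have h4 : u.im ≤ 1 := by nlinarith [sq_nonneg (u.im-1), sq_nonneg u.re]
  obtain ⟨e1, e2⟩ := Zsqrtd.ext_iff.mp hu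
  simp only [Zsqrtd.re_mul, Zsqrtd.im_mul] at e1 e2
  have hpodd : ¬ ((2:ℤ) ∣ (p:ℤ)) := by
    intro hd
    have : (2:ℕ) ∣ p := by exact_mod_cast hd
    exact hp2 ((Nat.Prime.eq_one_or_self_of_dvd hp 2 this).resolve_left (by norm_num)).symm
  have hpnotsq : ∀ c : ℤ, c * c ≠ (p:ℤ) := by
    intro c hc
    rcases (hpZ.irreducible.isUnit_or_isUnit hc.symm) with h' | h' <;>
    · rw [Int.isUnit_iff] at h'
      have hple := hp.one_lt
      rcases h' with rfl | rfl <;> [skip; skip] <;> omega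
  have key : (u.re = 1 ∧ u.im = 0) ∨ (u.re = -1 ∧ u.im = 0) ∨
      (u.re = 0 ∧ u.im = 1) ∨ (u.re = 0 ∧ u.im = -1) := by
    interval_cases u.re <;> interval_cases u.im <;> revert hre <;> norm_num
  rcases key with ⟨hr, hi⟩ | ⟨hr, hi⟩ | ⟨hr, hi⟩ | ⟨hr, hi⟩ <;> rw [hr, hi] at e1 e2
  · have hb : b = 0 := by simp at e2; linarith
    exact hpnotsq a (by linear_combination hnorm - b * hb)
  · have ha : a = 0 := by simp at e1; linarith
    exact hpnotsq b (by linear_combination hnorm - a * ha)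
  · have hab : a = -b := by simp at e1; linarith
    exact hpodd ⟨b*b, by linear_combination -hnorm + (a - b) * hab⟩
  · have hab : a = b := by simp at e1; linarith
    exact hpodd ⟨b*b, by linear_combination -hnorm + (a + b) * hab⟩

lemma gauss_key : ∀ e f : ℕ, ∀ z : GaussianInt, 0 < e → 0 < f →
    IsCoprime z.re z.im → ((e:ℤ))^2 * (f:ℤ) = z.norm →
    ∃ α β : GaussianInt, z = α^2 * β ∧ α.norm = (e:ℤ) ∧ β.norm = (f:ℤ) := by
  intro e
  induction e using Nat.strong_induction_on with
  | _ e ih =>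
    intro f z he hf hcop hnorm
    rcases eq_or_ne e 1 with rfl | hne
    · refine ⟨1, z, by ring, by simp [Zsqrtd.norm_def], ?_⟩
      rw [← hnorm]; push_cast; ring
    -- setup
    have pp : (e.minFac).Prime := Nat.minFac_prime hne
    set p := e.minFac with hpdef
    haveI : Fact p.Prime := ⟨pp⟩
    obtain ⟨e', he'⟩ := Nat.minFac_dvd e
    rw [← hpdef] at he'
    have hpZ : Prime (p : ℤ) := Int.prime_iff_natAbs_prime.mpr (by simpa using pp)
    have hp0 : (p:ℤ) ≠ 0 := by exact_mod_cast pp.ne_zero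
    have hnormz : z.norm = z.re^2 + z.im^2 := by rw [Zsqrtd.norm_def]; ring
    have hpsq : ((p:ℤ))^2 ∣ z.norm := ⟨(e':ℤ)^2 * f, by rw [← hnorm, he']; push_cast; ring⟩
    -- p ≠ 2
    have hp2 : p ≠ 2 := by
      rintro h2
      have h4 : (4:ℤ) ∣ z.re^2 + z.im^2 := by
        rw [← hnormz]
        exact dvd_trans (by rw [h2] at hpsq ⊢; norm_num) hpsq
      have hd1 : (2:ℤ) ∣ z.re := two_dvd_of_four_dvd_sq_add_sq _ _ h4
      have hd2 : (2:ℤ) ∣ z.im := two_dvd_of_four_dvd_sq_add_sq _ _ (by rwa [add_comm] at h4)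
      have := hcop.isUnit_of_dvd' hd1 hd2
      rw [Int.isUnit_iff] at this
      omega
    -- ¬ ((p:ℤ) : ℤ[i]) ∣ z
    have hPz : ¬ (((p:ℤ) : GaussianInt) ∣ z) := by
      intro hd
      rw [Zsqrtd.intCast_dvd] at hd
      have := hcop.isUnit_of_dvd' hd.1 hd.2
      rw [Int.isUnit_iff] at this
      have := pp.one_lt
      omega
    -- P ∣ z * star z
    have hPzz : ((p:ℤ) : GaussianInt) ∣ z * star z := by
      obtain ⟨c, hc⟩ := dvd_trans (dvd_pow_self (p:ℤ) two_ne_zero) hpsq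
      exact ⟨(c : GaussianInt), by rw [← Zsqrtd.norm_eq_mul_conj, hc]; push_cast; ring⟩
    -- p % 4 ≠ 3
    have hp43 : p % 4 ≠ 3 := by
      intro h43
      have hpr : Prime ((p:ℕ) : GaussianInt) :=
        (GaussianInt.prime_iff_mod_four_eq_three_of_nat_prime p).mpr h43
      have hpr' : Prime (((p:ℤ)) : GaussianInt) := by exact_mod_cast hpr
      rcases hpr'.dvd_or_dvd hPzz with hd | hd
      · exact hPz hd
      · refine hPz ?_
        rw [Zsqrtd.intCast_dvd] at hd ⊢
        constructor
        · simpa [Zsqrtd.re_star] using hd.1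
        · have h2 := hd.2
          rw [Zsqrtd.im_star, dvd_neg] at h2
          exact h2
    -- Fermat: p = a² + b²
    obtain ⟨a, b, hab⟩ := Nat.Prime.sq_add_sq hp43
    have habZ : (a:ℤ)^2 + (b:ℤ)^2 = (p:ℤ) := by exact_mod_cast hab
    have hnπ₀ : (⟨(a:ℤ), (b:ℤ)⟩ : GaussianInt).norm = (p:ℤ) := by
      simp [Zsqrtd.norm_def]; linear_combination habZ
    set π₀ : GaussianInt := ⟨(a:ℤ), (b:ℤ)⟩ with hπ₀def
    have hπ₀p : Prime π₀ := gauss_prime_of_norm_prime _ (by rw [hnπ₀]; exact hpZ)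
    have hsπ₀p : Prime (star π₀) :=
      gauss_prime_of_norm_prime _ (by rw [Zsqrtd.norm_conj, hnπ₀]; exact hpZ)
    have hstar : star π₀ = (⟨(a:ℤ), -(b:ℤ)⟩ : GaussianInt) := Zsqrtd.star_mk _ _
    have hnd1 : ¬ (star π₀ ∣ π₀) := by
      have h := gauss_not_dvd_conj (a:ℤ) (-(b:ℤ)) p pp hp2 (by linear_combination habZ)
      rw [neg_neg] at h
      rw [hstar]
      exact h
    have hnd2 : ¬ (π₀ ∣ star π₀) := by
      rw [hstar]
      exact gauss_not_dvd_conj (a:ℤ) (b:ℤ) p pp hp2 habZ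
    have hπ₀zz : π₀ ∣ z * star z :=
      dvd_trans ⟨star π₀, by rw [← hnπ₀]; exact Zsqrtd.norm_eq_mul_conj π₀⟩ hPzz
    obtain ⟨π, hπp, hsπp, hnpd, hπz, hnπ⟩ :
        ∃ π : GaussianInt, Prime π ∧ Prime (star π) ∧ ¬ (star π ∣ π) ∧ π ∣ z ∧
          π.norm = (p:ℤ) := by
      rcases hπ₀p.dvd_or_dvd hπ₀zz with hd | hd
      · exact ⟨π₀, hπ₀p, hsπ₀p, hnd1, hd, hnπ₀⟩
      · refine ⟨star π₀, hsπ₀p, ?_, ?_, ?_, by rw [Zsqrtd.norm_conj, hnπ₀]⟩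
        · rw [star_star]; exact hπ₀p
        · rw [star_star]; exact hnd2
        · have h := map_dvd (starRingEnd GaussianInt) hd
          simpa [starRingEnd_apply, star_star] using h
    have hPmul : π * star π = ((p:ℤ) : GaussianInt) := by
      rw [← hnπ]; exact (Zsqrtd.norm_eq_mul_conj π).symm
    have hπ0 : π ≠ 0 := hπp.ne_zero
    obtain ⟨w, hw⟩ := hπz
    have hnsz : ¬ (star π ∣ z) := by
      intro hd
      rw [hw] at hd
      rcases hsπp.dvd_or_dvd hd with hcase | hcase
      · exact hnpd hcase
      · exact hPz (by rw [← hPmul, hw]; exact mul_dvd_mul_left π hcase)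
    have hP2 : (((p:ℤ) : GaussianInt))^2 ∣ z * star z := by
      obtain ⟨c, hc⟩ := hpsq
      exact ⟨(c : GaussianInt), by rw [← Zsqrtd.norm_eq_mul_conj, hc]; push_cast; ring⟩
    have h3 : π ∣ w * star z := by
      have h1 : π * (π * (star π)^2) ∣ π * (w * star z) := by
        calc π * (π * (star π)^2) = (((p:ℤ):GaussianInt))^2 := by rw [← hPmul]; ring
        _ ∣ z * star z := hP2
        _ = π * (w * star z) := by rw [hw]; ring
      exact dvd_trans (dvd_mul_right π ((star π)^2)) ((mul_dvd_mul_iff_left hπ0).mp h1)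
    have hπw : π ∣ w := by
      rcases hπp.dvd_or_dvd h3 with hcase | hcase
      · exact hcase
      · exfalso
        apply hnsz
        have h := map_dvd (starRingEnd GaussianInt) hcase
        simpa [starRingEnd_apply, star_star] using h
    obtain ⟨w', hw'⟩ := hπw
    have hz2 : z = π^2 * w' := by rw [hw, hw']; ring
    have hnw' : w'.norm = (e':ℤ)^2 * (f:ℤ) := by
      have h := congrArg Zsqrtd.norm hz2
      rw [sq, Zsqrtd.norm_mul, Zsqrtd.norm_mul, hnπ] at h
      apply mul_left_cancel₀ (pow_ne_zero 2 hp0)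
      calc ((p:ℤ))^2 * w'.norm = z.norm := by rw [h]; ring
      _ = (e:ℤ)^2 * f := hnorm.symm
      _ = ((p:ℤ))^2 * ((e':ℤ)^2 * f) := by rw [he']; push_cast; ring
    have he'pos : 0 < e' := by
      rcases Nat.eq_zero_or_pos e' with rfl | h
      · rw [he'] at he; omega
      · exact h
    have he'lt : e' < e := by
      have h2 := pp.two_le
      have := Nat.mul_le_mul_right e' h2
      omega
    have hcopw : IsCoprime w'.re w'.im := by
      rw [Int.isCoprime_iff_gcd_eq_one]
      by_contra hg
      have qq : (Int.gcd w'.re w'.im).minFac.Prime := Nat.minFac_prime hg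
      have hq1 : ((Int.gcd w'.re w'.im).minFac : ℤ) ∣ w'.re :=
        dvd_trans (Int.natCast_dvd_natCast.mpr (Nat.minFac_dvd _)) (Int.gcd_dvd_left _ _)
      have hq2 : ((Int.gcd w'.re w'.im).minFac : ℤ) ∣ w'.im :=
        dvd_trans (Int.natCast_dvd_natCast.mpr (Nat.minFac_dvd _)) (Int.gcd_dvd_right _ _)
      have hqz : ((((Int.gcd w'.re w'.im).minFac : ℤ)) : GaussianInt) ∣ z := by
        rw [hz2]
        exact Dvd.dvd.mul_left ((Zsqrtd.intCast_dvd _ _).mpr ⟨hq1, hq2⟩) (π^2)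
      rw [Zsqrtd.intCast_dvd] at hqz
      have hqu := hcop.isUnit_of_dvd' hqz.1 hqz.2
      rw [Int.isUnit_iff] at hqu
      have := qq.one_lt
      omega
    obtain ⟨α', β', hzab, hnα', hnβ'⟩ :=
      ih e' he'lt f w' he'pos hf hcopw hnw'.symm
    refine ⟨π * α', β', ?_, ?_, hnβ'⟩
    · rw [hz2, hzab]; ring
    · rw [Zsqrtd.norm_mul, hnπ, hnα', he']
      push_cast
      ring

/-- Factorization in `ℤ[i]` of solutions of `e² f = n² + 1`. -/
theorem gaussian_factorization_of_solution (e f n : ℕ)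
    (he : 0 < e) (hf : 0 < f) (hn : 0 < n) (h : e ^ 2 * f = n ^ 2 + 1) :
    ∃ x₁ x₂ y₁ y₂ : ℤ,
      (e : ℤ) = x₁ ^ 2 + x₂ ^ 2 ∧
      (f : ℤ) = y₁ ^ 2 + y₂ ^ 2 ∧
      ((⟨x₁, x₂⟩ : GaussianInt) ^ 2 * ⟨y₁, y₂⟩ = ⟨(n : ℤ), 1⟩) ∧
      2 * x₁ * x₂ * y₁ + (x₁ ^ 2 - x₂ ^ 2) * y₂ = 1 := by
  have hZ : ((e:ℤ))^2 * (f:ℤ) = (n:ℤ)^2 + 1 := by exact_mod_cast h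
  have hcop : IsCoprime ((⟨(n:ℤ),1⟩ : GaussianInt)).re ((⟨(n:ℤ),1⟩ : GaussianInt)).im :=
    isCoprime_one_right
  have hnorm : ((e:ℤ))^2 * (f:ℤ) = (⟨(n:ℤ),1⟩ : GaussianInt).norm := by
    rw [Zsqrtd.norm_def]
    simp
    linear_combination hZ
  obtain ⟨α, β, hzab, hnα, hnβ⟩ := gauss_key e f _ he hf hcop hnorm
  refine ⟨α.re, α.im, β.re, β.im, ?_, ?_, ?_, ?_⟩
  · rw [← hnα, Zsqrtd.norm_def]; ring
  · rw [← hnβ, Zsqrtd.norm_def]; ring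
  · have h1 : (⟨α.re, α.im⟩ : GaussianInt) = α := rfl
    have h2 : (⟨β.re, β.im⟩ : GaussianInt) = β := rfl
    rw [h1, h2]
    exact hzab.symm
  · have him := congrArg Zsqrtd.im hzab
    simp only [pow_two, Zsqrtd.im_mul, Zsqrtd.re_mul] at him
    simp at him
    linear_combination -him
end

section
/- There is an absolute constant C such that for every positive integer f and every real E ≥ 2, the number of pairs (e, n) of positive integers with E/2 < e ≤ E and e²·f = n²+1 is at most C·log E. -/
/-- Two solutions of the negative Pell equation differ by a factor bigger than 2. -/
lemma pell_gap (f e₁ n₁ e₂ n₂ : ℤ) (hf : 2 ≤ f) (he₁ : 0 < e₁) (hn₁ : 0 < n₁)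
    (he₂ : 0 < e₂) (hn₂ : 0 < n₂)
    (h₁ : e₁ ^ 2 * f = n₁ ^ 2 + 1) (h₂ : e₂ ^ 2 * f = n₂ ^ 2 + 1)
    (hlt : e₁ < e₂) : 2 * e₁ + 1 ≤ e₂ := by
  set a : ℤ := f * e₁ * e₂ - n₁ * n₂ with ha_def
  set c : ℤ := n₂ * e₁ - n₁ * e₂ with hc_def
  have ha2 : a ^ 2 = 1 + f * c ^ 2 := by
    have : a ^ 2 - f * c ^ 2 = (e₁ ^ 2 * f - n₁ ^ 2) * (e₂ ^ 2 * f - n₂ ^ 2) := by ring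
    nlinarith [this]
  have he : e₂ = a * e₁ + c * n₁ := by
    have : a * e₁ + c * n₁ = e₂ * (e₁ ^ 2 * f - n₁ ^ 2) := by ring
    nlinarith [this]
  have hckey : c * (n₂ * e₁ + n₁ * e₂) = e₂ ^ 2 - e₁ ^ 2 := by
    have : c * (n₂ * e₁ + n₁ * e₂) = n₂ ^ 2 * e₁ ^ 2 - n₁ ^ 2 * e₂ ^ 2 := by ring
    nlinarith [this]
  have hc : 0 < c := by
    have hpos : 0 < n₂ * e₁ + n₁ * e₂ := by positivity
    nlinarith [mul_pos (mul_pos hn₂ he₁) (mul_pos hn₁ he₂)]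
  have ha : 0 < a := by
    have : (f * e₁ * e₂) ^ 2 = (n₁ ^ 2 + 1) * (n₂ ^ 2 + 1) := by
      calc (f * e₁ * e₂) ^ 2 = (e₁ ^ 2 * f) * (e₂ ^ 2 * f) := by ring
        _ = (n₁ ^ 2 + 1) * (n₂ ^ 2 + 1) := by rw [h₁, h₂]
    nlinarith [mul_pos hn₁ hn₂, mul_pos (mul_pos (by linarith : (0:ℤ) < f) he₁) he₂]
  have ha2' : 2 ≤ a := by
    nlinarith [hc, ha, hf]
  nlinarith [he, ha2', hc, hn₁, he₁]

/-- Estermann's bound: for fixed `f`, there are `O(log E)` pairs `(e, n)` with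
`E/2 < e ≤ E` and `e² f = n² + 1`. -/
theorem estermann_dyadic_bound :
    ∃ C : ℝ, ∀ f : ℕ, 0 < f → ∀ E : ℝ, 2 ≤ E →
      (Nat.card {p : ℕ × ℕ | 0 < p.1 ∧ 0 < p.2 ∧
          E / 2 < (p.1 : ℝ) ∧ (p.1 : ℝ) ≤ E ∧
          p.1 ^ 2 * f = p.2 ^ 2 + 1} : ℝ) ≤ C * Real.log E := by
  refine ⟨2, fun f hf E hE => ?_⟩
  set S : Set (ℕ × ℕ) := {p : ℕ × ℕ | 0 < p.1 ∧ 0 < p.2 ∧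
      E / 2 < (p.1 : ℝ) ∧ (p.1 : ℝ) ≤ E ∧ p.1 ^ 2 * f = p.2 ^ 2 + 1} with hS
  have hsub : S.Subsingleton := by
    rintro ⟨e₁, n₁⟩ ⟨he₁, hn₁, hE₁, hE₁', heq₁⟩ ⟨e₂, n₂⟩ ⟨he₂, hn₂, hE₂, hE₂', heq₂⟩
    -- rule out f = 1
    rcases eq_or_lt_of_le (show 1 ≤ f from hf) with hf1 | hf2
    · exfalso
      have h1 : e₁ ^ 2 = n₁ ^ 2 + 1 := by
        have := heq₁
        rw [← hf1] at this
        simpa using this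
      have hne : n₁ < e₁ := by nlinarith
      nlinarith
    have hf2' : (2 : ℤ) ≤ (f : ℤ) := by exact_mod_cast hf2
    have hz₁ : (e₁ : ℤ) ^ 2 * f = (n₁ : ℤ) ^ 2 + 1 := by exact_mod_cast heq₁
    have hz₂ : (e₂ : ℤ) ^ 2 * f = (n₂ : ℤ) ^ 2 + 1 := by exact_mod_cast heq₂
    have hee : e₁ = e₂ := by
      rcases lt_trichotomy e₁ e₂ with h | h | h
      · exfalso
        have := pell_gap f e₁ n₁ e₂ n₂ hf2' (by exact_mod_cast he₁) (by exact_mod_cast hn₁)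
          (by exact_mod_cast he₂) (by exact_mod_cast hn₂) hz₁ hz₂ (by exact_mod_cast h)
        have hr : 2 * (e₁ : ℝ) + 1 ≤ (e₂ : ℝ) := by exact_mod_cast this
        linarith
      · exact h
      · exfalso
        have := pell_gap f e₂ n₂ e₁ n₁ hf2' (by exact_mod_cast he₂) (by exact_mod_cast hn₂)
          (by exact_mod_cast he₁) (by exact_mod_cast hn₁) hz₂ hz₁ (by exact_mod_cast h)
        have hr : 2 * (e₂ : ℝ) + 1 ≤ (e₁ : ℝ) := by exact_mod_cast this
        linarith
    have hnn : n₁ = n₂ := by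
      have : n₁ ^ 2 = n₂ ^ 2 := by
        subst hee
        have h : n₁ ^ 2 + 1 = n₂ ^ 2 + 1 := heq₁.symm.trans heq₂
        omega
      exact Nat.pow_left_injective (by norm_num) this
    simp [hee, hnn]
  have hcard : Nat.card S ≤ 1 := by
    rcases hsub.eq_empty_or_singleton with h | ⟨a, h⟩ <;> simp [h]
  have h1 : (Nat.card S : ℝ) ≤ 1 := by exact_mod_cast hcard
  have hlog : Real.log 2 ≤ Real.log E := Real.log_le_log (by norm_num) hE
  have h2 : (0.6931471803 : ℝ) < Real.log 2 := Real.log_two_gt_d9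
  calc (Nat.card S : ℝ) ≤ 1 := h1
    _ ≤ 2 * Real.log E := by linarith
end
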